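/- arXiv:2212.07804 — 3 statements merged into one kernel-verified Lean document; each statement's English description precedes it below -/
import Mathlib

section
/- Let X be a Banach space, 1 ≤ p < ∞, and let g_j : Ω → X, j ∈ ℕ, be a sequence of measurable functions on a probability space (Ω, Σ, P). Assume there exist a sequence (a_k)_{k ∈ ℕ} ∈ ℓ¹(ℕ) and measurable sets (D_k)_{k ∈ ℕ} such that P(supp g_j \ ⋃_{k ≥ j} D_k) = 0 for every j, and ∫_{D_{k+j}} ‖g_j‖^p dP ≤ |a_k|^p ‖g_j‖_{L^p(Ω;X)}^p for all k, j ∈ ℕ. If the series ∑_{j ∈ ℕ} g_j converges almost everywhere, then ‖∑_{j ∈ ℕ} g_j‖_{L^p(Ω;X)} ≤ (∑_{k ∈ ℕ} |a_k|) · (∑_{j ∈ ℕ} ‖g_j‖_{L^p(Ω;X)}^p)^{1/p}. -/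
open MeasureTheory ENNReal

noncomputable section

namespace Paper

/-- A filtered atomic probability space structure on `(Ω, m0, P)`:
an increasing sequence of finite measurable partitions `part n` of `Ω` into atoms of
positive measure (with `part 0 = {univ}`, so that the `0`-th σ-algebra is trivial),
generating the ambient σ-algebra, together with a choice `star n A` of a child of
maximal measure for every atom `A` of `part n`. -/
structure FilteredAtomic (Ω : Type*) [m0 : MeasurableSpace Ω] (P : Measure Ω) where
  part : ℕ → Finset (Set Ω)
  part_zero : part 0 = {Set.univ}
  meas : ∀ n, ∀ A ∈ part n, MeasurableSet A
  pos : ∀ n, ∀ A ∈ part n, 0 < P A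
  disj : ∀ n, (part n : Set (Set Ω)).PairwiseDisjoint id
  cover : ∀ n, ⋃₀ (part n : Set (Set Ω)) = Set.univ
  refined : ∀ n, ∀ A ∈ part (n + 1), ∃ B ∈ part n, A ⊆ B
  gen : m0 = ⨆ n, MeasurableSpace.generateFrom (part n : Set (Set Ω))
  star : ℕ → Set Ω → Set Ω
  star_mem : ∀ n, ∀ A ∈ part n, star n A ∈ part (n + 1)
  star_sub : ∀ n, ∀ A ∈ part n, star n A ⊆ A
  star_max : ∀ n, ∀ A ∈ part n, ∀ B ∈ part (n + 1), B ⊆ A → P B ≤ P (star n A)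

variable {Ω : Type*} [m0 : MeasurableSpace Ω] {P : Measure Ω}

/-- The filtration `F_n` generated by the atoms of the `n`-th partition
(`F_0` is the trivial σ-algebra since `part 0 = {univ}`). -/
def FilteredAtomic.filt (F : FilteredAtomic Ω P) (n : ℕ) : MeasurableSpace Ω :=
  MeasurableSpace.generateFrom (F.part n : Set (Set Ω))

/-- The collection 𝒜 of all atoms. -/
def FilteredAtomic.atoms (F : FilteredAtomic Ω P) : Set (Set Ω) :=
  ⋃ n, (F.part n : Set (Set Ω))

/-- The collection 𝒞 = {star A : A ∈ 𝒜}. -/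
def FilteredAtomic.starSets (F : FilteredAtomic Ω P) : Set (Set Ω) :=
  {B | ∃ n, ∃ A ∈ F.part n, B = F.star n A}

/-- The collection ℰ = 𝒜 \ 𝒞. -/
def FilteredAtomic.eColl (F : FilteredAtomic Ω P) : Set (Set Ω) :=
  F.atoms \ F.starSets

/-- The collection ℬ = {Ã : A ∈ 𝒜, P(Ã) > 0}, where Ã = A \ star A. -/
def FilteredAtomic.bColl (F : FilteredAtomic Ω P) : Set (Set Ω) :=
  {S | (∃ n, ∃ A ∈ F.part n, S = A \ F.star n A) ∧ 0 < P S}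

/-- The Carleson constant [[R]] of a collection of sets. -/
def carleson (P : Measure Ω) (R : Set (Set Ω)) : ℝ≥0∞ :=
  ⨆ I ∈ R, (P I)⁻¹ * ∑' J : {J : Set Ω // J ∈ R ∧ J ⊆ I}, P (J : Set Ω)

/-- A collection is nested if any two members are disjoint or comparable. -/
def Nested (R : Set (Set Ω)) : Prop :=
  ∀ A ∈ R, ∀ B ∈ R, (A ∩ B).Nonempty → A ⊆ B ∨ B ⊆ A

/-- `G1 R A`: the maximal members of `R` strictly contained in `A`. -/
def G1 (R : Set (Set Ω)) (A : Set Ω) : Set (Set Ω) :=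
  {B | B ∈ R ∧ B ⊂ A ∧ ∀ C ∈ R, C ⊂ A → B ⊆ C → B = C}

/-- `Gk R k A`: the `k`-th generation of `R` inside `A`. -/
def Gk (R : Set (Set Ω)) : ℕ → Set Ω → Set (Set Ω)
  | 0, A => {A}
  | k + 1, A => ⋃ J ∈ Gk R k A, G1 R J

/-- Martingale difference `E[f|F_{n+1}] - E[f|F_n]`; with the present indexing this is the
paper's `Δ_{n+1} f`, so `fun n => F.mdiff f n` enumerates `Δ_1 f, Δ_2 f, …`. -/
def FilteredAtomic.mdiff (F : FilteredAtomic Ω P) {X : Type*} [NormedAddCommGroup X]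
    [NormedSpace ℝ X] [CompleteSpace X] (f : Ω → X) (n : ℕ) : Ω → X :=
  P[f|F.filt (n + 1)] - P[f|F.filt n]

/-- `(‖E f‖^p + ∑_{n ≥ 1} ‖E[f|F_n] - E[f|F_{n-1}]‖_{L^p}^p)^{1/p}` as an `ℝ≥0∞` number. -/
def FilteredAtomic.mtBound (F : FilteredAtomic Ω P) {X : Type*} [NormedAddCommGroup X]
    [NormedSpace ℝ X] [CompleteSpace X] (f : Ω → X) (p : ℝ) : ℝ≥0∞ :=
  ((‖∫ ω, f ω ∂P‖₊ : ℝ≥0∞) ^ p +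
    ∑' n : ℕ, eLpNorm (F.mdiff f n) (ENNReal.ofReal p) P ^ p) ^ (1 / p)

/-- `M` is a scalar martingale type `p` constant for the filtered space. -/
def ScalarMT (F : FilteredAtomic Ω P) (p M : ℝ) : Prop :=
  1 ≤ M ∧ ∀ g : Ω → ℝ, MemLp g (ENNReal.ofReal p) P →
    eLpNorm g (ENNReal.ofReal p) P ≤ ENNReal.ofReal M * F.mtBound g p

/-- The dyadic interval `[k/2^n, (k+1)/2^n) ⊆ [0,1)` (for `k < 2^n`). -/
def dyadic (n k : ℕ) : Set ℝ := Set.Ico ((k : ℝ) / 2 ^ n) (((k : ℝ) + 1) / 2 ^ n)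

/-- The Haar function `h_I = 1_{I⁺} - 1_{I⁻}` of the dyadic interval `I = [k/2^n, (k+1)/2^n)`. -/
def haarFn (n k : ℕ) : ℝ → ℝ :=
  (dyadic (n + 1) (2 * k)).indicator 1 - (dyadic (n + 1) (2 * k + 1)).indicator 1

/-- `X` has Haar type `p` with constant `C`: for every finitely supported family of vectors
indexed by dyadic subintervals of `[0,1)` (encoded as pairs `(n,k)` with `k < 2^n`),
`‖∑ x_I h_I‖_{L^p([0,1);X)} ≤ C (∑ ‖x_I‖^p |I|)^{1/p}`. -/
def HaarTypeWith (X : Type*) [NormedAddCommGroup X] [NormedSpace ℝ X] (p C : ℝ) : Prop :=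
  ∀ s : Finset (ℕ × ℕ), (∀ q ∈ s, q.2 < 2 ^ q.1) → ∀ x : ℕ × ℕ → X,
    (∫ t in Set.Ico (0 : ℝ) 1, ‖∑ q ∈ s, haarFn q.1 q.2 t • x q‖ ^ p) ^ (1 / p) ≤
      C * (∑ q ∈ s, ‖x q‖ ^ p * ((2 : ℝ) ^ q.1)⁻¹) ^ (1 / p)

/-- The order `≺` on atoms: earlier generation first, and within a generation larger
measure first. -/
def Prec (F : FilteredAtomic Ω P) (B₁ B₂ : Set Ω) : Prop :=
  ∃ l m : ℕ, B₁ ∈ F.part l ∧ B₂ ∈ F.part m ∧ (l < m ∨ (l = m ∧ P B₂ < P B₁))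

/-- `U_j = {B ∈ G_1(ℰ, Y_{j-1}) : B ≺ Y_j}`. -/
def Uset (F : FilteredAtomic Ω P) (Y : ℕ → Set Ω) (j : ℕ) : Set (Set Ω) :=
  {B | B ∈ G1 F.eColl (Y (j - 1)) ∧ Prec F B (Y j)}

/-- The sequence `Y` satisfies condition `D_m(A)`. -/
def CondD (F : FilteredAtomic Ω P) (A : Set Ω) (Y : ℕ → Set Ω) (m : ℕ) : Prop :=
  Y 0 = A ∧ (∀ j ∈ Finset.Icc 1 m, Y j ∈ G1 F.eColl (Y (j - 1))) ∧
    ∑ j ∈ Finset.Icc 1 m, P (⋃₀ Uset F Y j) ≤ 2⁻¹ * P A ∧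
    2⁻¹ * P A ≤ P (Y m) + ∑ j ∈ Finset.Icc 1 m, P (⋃₀ Uset F Y j)

/-- The collection ℰ supports all initial segments of a generalized Haar system with
constant `K`.  Dyadic intervals in `𝒟_n` are encoded as pairs `(j,k)`, `j ≤ n`, `k < 2^j`,
corresponding to `[k/2^j, (k+1)/2^j)`; `ε = δ·2^{-n-1}`. -/
def SupportsHaar (F : FilteredAtomic Ω P) (K : ℝ) : Prop :=
  0 < K ∧ ∀ (n : ℕ) (δ : ℝ), 0 < δ →
    ∃ (C : ℕ × ℕ → Set (Set Ω)) (g : ℕ × ℕ → Ω → ℝ) (A0 : Set Ω) (S : ℕ),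
      A0 ∈ F.eColl ∧
      -- (A1)
      C (0, 0) = {A0} ∧
      -- (A2)
      (∀ j k, j ≤ n → k < 2 ^ j → C (j, k) ⊆ {A | A ∈ F.eColl ∧ A ⊆ A0}) ∧
      -- (A3)
      (∀ j k, j ≤ n → k < 2 ^ j → (C (j, k)).PairwiseDisjoint id) ∧
      -- (A4)
      (∀ j k l i, j ≤ n → k < 2 ^ j → l ≤ n → i < 2 ^ l →
        ((⋃₀ C (j, k) ⊆ ⋃₀ C (l, i) ↔ dyadic j k ⊆ dyadic l i) ∧
          ((⋃₀ C (j, k) ∩ ⋃₀ C (l, i)).Nonempty ↔ (dyadic j k ∩ dyadic l i).Nonempty))) ∧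
      -- (A5)
      (∀ j k, j + 1 ≤ n → k < 2 ^ j →
        (∀ ω, g (j, k) ω ∈ Set.Icc (-1 : ℝ) 1) ∧
        Function.support (g (j, k)) ⊆ ⋃₀ C (j, k) ∧
        ⋃₀ C (j + 1, 2 * k) ⊆ {ω | g (j, k) ω = 1} ∧
        ⋃₀ C (j + 1, 2 * k + 1) ⊆ {ω | g (j, k) ω = -1}) ∧
      -- (A6)
      (∀ j k, j ≤ n → k < 2 ^ j → ∀ A ∈ C (j, k), MeasurableSet[F.filt S] A) ∧
      -- (A7)
      (∀ j k, j + 1 ≤ n → k < 2 ^ j → Measurable[F.filt S] (g (j, k))) ∧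
      -- (A8)
      (∀ A ∈ F.part S, ∀ m, 1 ≤ m → m ≤ S →
        ∀ j k j' k', j + 1 ≤ n → k < 2 ^ j → j' + 1 ≤ n → k' < 2 ^ j' →
          ¬ F.mdiff (g (j, k)) (m - 1) =ᵐ[P.restrict A] (0 : Ω → ℝ) →
          ¬ F.mdiff (g (j', k')) (m - 1) =ᵐ[P.restrict A] (0 : Ω → ℝ) →
          (j, k) = (j', k')) ∧
      -- (A9)
      (∀ j k, j + 1 ≤ n → k < 2 ^ j →
        ∑' i : ℕ, eLpNorm (F.mdiff (g (j, k)) i) 1 P ≤ ENNReal.ofReal K * P (⋃₀ C (j, k))) ∧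
      -- (A10)
      (∀ j k, j ≤ n → k < 2 ^ j →
        ENNReal.ofReal (((2 : ℝ) ^ j)⁻¹ - 2 * (δ * ((2 : ℝ) ^ (n + 1))⁻¹)) * P A0 ≤
            P (⋃₀ C (j, k)) ∧
          P (⋃₀ C (j, k)) ≤ ENNReal.ofReal (((2 : ℝ) ^ j)⁻¹) * P A0)

end Paper

open MeasureTheory ENNReal in
/-- Minkowski's inequality for countable sums of `ℝ≥0∞`-valued functions. -/
private lemma aux_mink {α : Type*} [MeasurableSpace α] (μ : Measure α) {p : ℝ} (hp : 1 ≤ p)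
    (h : ℕ → α → ℝ≥0∞) (hm : ∀ k, AEMeasurable (h k) μ) :
    (∫⁻ x, (∑' k, h k x) ^ p ∂μ) ^ (1 / p) ≤ ∑' k, (∫⁻ x, h k x ^ p ∂μ) ^ (1 / p) := by
  have hp0 : 0 < p := lt_of_lt_of_le one_pos hp
  have hmS : ∀ n : ℕ, AEMeasurable (fun x => ∑ k ∈ Finset.range n, h k x) μ :=
    fun n => Finset.aemeasurable_fun_sum _ fun k _ => hm k
  have hfin : ∀ n : ℕ, (∫⁻ x, (∑ k ∈ Finset.range n, h k x) ^ p ∂μ) ^ (1 / p) ≤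
      ∑ k ∈ Finset.range n, (∫⁻ x, h k x ^ p ∂μ) ^ (1 / p) := by
    intro n
    induction n with
    | zero =>
        simp only [Finset.range_zero, Finset.sum_empty, ENNReal.zero_rpow_of_pos hp0,
          lintegral_zero, ENNReal.zero_rpow_of_pos (by positivity : (0:ℝ) < 1 / p), le_refl]
    | succ n ih =>
        have hadd := ENNReal.lintegral_Lp_add_le (hmS n) (hm n) hp
        simp only [Pi.add_apply] at hadd
        calc (∫⁻ x, (∑ k ∈ Finset.range (n + 1), h k x) ^ p ∂μ) ^ (1 / p)
            = (∫⁻ x, ((∑ k ∈ Finset.range n, h k x) + h n x) ^ p ∂μ) ^ (1 / p) := by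
              simp only [Finset.sum_range_succ]
          _ ≤ (∫⁻ x, (∑ k ∈ Finset.range n, h k x) ^ p ∂μ) ^ (1 / p) +
              (∫⁻ x, h n x ^ p ∂μ) ^ (1 / p) := hadd
          _ ≤ _ := by
              rw [Finset.sum_range_succ]; exact add_le_add ih le_rfl
  have hmono : ∀ x : α, Monotone fun n => (∑ k ∈ Finset.range n, h k x) ^ p := fun x i j hij =>
    ENNReal.rpow_le_rpow (Finset.sum_le_sum_of_subset (Finset.range_subset_range.2 hij)) hp0.le
  have hbot : ∀ q : ℝ, 0 < q → (fun x : ℝ≥0∞ => x ^ q) ⊥ = ⊥ := by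
    intro q hq
    simp only [ENNReal.bot_eq_zero]
    exact ENNReal.zero_rpow_of_pos hq
  have hsup : ∀ x, (∑' k, h k x) ^ p = ⨆ n, (∑ k ∈ Finset.range n, h k x) ^ p := by
    intro x
    rw [ENNReal.tsum_eq_iSup_nat]
    exact Monotone.map_iSup_of_continuousAt
      ENNReal.continuous_rpow_const.continuousAt (ENNReal.monotone_rpow_of_nonneg hp0.le)
      (hbot p hp0)
  calc (∫⁻ x, (∑' k, h k x) ^ p ∂μ) ^ (1 / p)
      = (⨆ n, ∫⁻ x, (∑ k ∈ Finset.range n, h k x) ^ p ∂μ) ^ (1 / p) := by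
        rw [← lintegral_iSup' (fun n => (hmS n).pow_const p)
          (Filter.Eventually.of_forall fun x => hmono x)]
        congr 1
        exact lintegral_congr fun x => hsup x
    _ = ⨆ n, (∫⁻ x, (∑ k ∈ Finset.range n, h k x) ^ p ∂μ) ^ (1 / p) :=
        Monotone.map_iSup_of_continuousAt ENNReal.continuous_rpow_const.continuousAt
          (ENNReal.monotone_rpow_of_nonneg (by positivity)) (hbot _ (by positivity))
    _ ≤ ∑' k, (∫⁻ x, h k x ^ p ∂μ) ^ (1 / p) :=
        iSup_le fun n => (hfin n).trans (ENNReal.sum_le_tsum _)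

open MeasureTheory ENNReal in
/-- almost disjointly supported sequences, Lemma `estDD`. -/
theorem statement_10 {Ω : Type*} [m0 : MeasurableSpace Ω] (P : Measure Ω)
    [IsProbabilityMeasure P]
    (X : Type*) [NormedAddCommGroup X]
    (p : ℝ) (hp : 1 ≤ p)
    (g : ℕ → Ω → X) (hgmeas : ∀ j, AEStronglyMeasurable (g j) P)
    (a : ℕ → ℝ) (ha : Summable fun k => |a k|)
    (D : ℕ → Set Ω) (hDmeas : ∀ k, MeasurableSet (D k))
    (hsupp : ∀ j, P (Function.support (g j) \ ⋃ k, ⋃ (_ : j ≤ k), D k) = 0)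
    (hsmall : ∀ k j, (∫⁻ ω in D (k + j), (‖g j ω‖₊ : ℝ≥0∞) ^ p ∂P) ≤
      ENNReal.ofReal (|a k| ^ p) * eLpNorm (g j) (ENNReal.ofReal p) P ^ p)
    (f : Ω → X) (hf : ∀ᵐ ω ∂P, HasSum (fun j => g j ω) (f ω)) :
    eLpNorm f (ENNReal.ofReal p) P ≤
      ENNReal.ofReal (∑' k, |a k|) *
        (∑' j, eLpNorm (g j) (ENNReal.ofReal p) P ^ p) ^ (1 / p) := by
  classical
  have hp0 : 0 < p := lt_of_lt_of_le one_pos hp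
  have hq0 : (ENNReal.ofReal p) ≠ 0 := by
    simp [ENNReal.ofReal_eq_zero, not_le, hp0]
  have hqtop : (ENNReal.ofReal p) ≠ ∞ := ENNReal.ofReal_ne_top
  have heLp : ∀ h : Ω → X,
      eLpNorm h (ENNReal.ofReal p) P = (∫⁻ ω, (‖h ω‖₊ : ℝ≥0∞) ^ p ∂P) ^ (1 / p) := by
    intro h
    simp only [eLpNorm_eq_lintegral_rpow_enorm_toReal hq0 hqtop, ENNReal.toReal_ofReal hp0.le, enorm_eq_nnnorm]
  -- the union sets
  set U : ℕ → Set Ω := fun j => ⋃ k, ⋃ (_ : j ≤ k), D k with hU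
  have hUmeas : ∀ j, MeasurableSet (U j) :=
    fun j => MeasurableSet.iUnion fun k => MeasurableSet.iUnion fun _ => hDmeas k
  -- a.e. support condition
  have h1 : ∀ᵐ ω ∂P, ∀ j, g j ω ≠ 0 → ω ∈ U j := by
    rw [ae_all_iff]
    intro j
    rw [ae_iff]
    have hset : {ω | ¬(g j ω ≠ 0 → ω ∈ U j)} = Function.support (g j) \ U j := by
      ext ω
      simp only [Set.mem_setOf_eq, Set.mem_diff, Function.mem_support]
      tauto
    rw [hset]
    exact hsupp j
  -- Case A : all `a k` vanish
  by_cases hA : ∀ k, a k = 0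
  · have hg0 : ∀ j, ∀ᵐ ω ∂P, g j ω = 0 := by
      intro j
      have hDk0 : ∀ k, (∫⁻ ω in D (k + j), (‖g j ω‖₊ : ℝ≥0∞) ^ p ∂P) = 0 := by
        intro k
        refine le_antisymm ?_ zero_le
        have := hsmall k j
        simpa [hA k, Real.zero_rpow hp0.ne'] using this
      have hU0 : (∫⁻ ω in ⋃ k, D (k + j), (‖g j ω‖₊ : ℝ≥0∞) ^ p ∂P) = 0 := by
        refine le_antisymm ?_ zero_le
        calc (∫⁻ ω in ⋃ k, D (k + j), (‖g j ω‖₊ : ℝ≥0∞) ^ p ∂P)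
            ≤ ∑' k, ∫⁻ ω in D (k + j), (‖g j ω‖₊ : ℝ≥0∞) ^ p ∂P :=
              lintegral_iUnion_le _ _
          _ = 0 := by simp [hDk0]
      have hsub : U j ⊆ ⋃ k, D (k + j) := by
        intro ω hω
        simp only [hU, Set.mem_iUnion] at hω ⊢
        obtain ⟨k, hk, hωk⟩ := hω
        exact ⟨k - j, by rwa [Nat.sub_add_cancel hk]⟩
      have hU0' : (∫⁻ ω in U j, (‖g j ω‖₊ : ℝ≥0∞) ^ p ∂P) = 0 :=
        le_antisymm (le_trans (lintegral_mono_set hsub) hU0.le) zero_le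
      have hae : ∀ᵐ ω ∂(P.restrict (U j)), (‖g j ω‖₊ : ℝ≥0∞) ^ p = 0 :=
        (lintegral_eq_zero_iff' (((hgmeas j).enorm.pow_const p).restrict)).mp hU0'
      have hae' : ∀ᵐ ω ∂P, ω ∈ U j → (‖g j ω‖₊ : ℝ≥0∞) ^ p = 0 :=
        ae_imp_of_ae_restrict hae
      filter_upwards [hae', h1] with ω hω hω1
      by_contra hne
      have hmem : ω ∈ U j := hω1 j hne
      have := hω hmem
      rw [ENNReal.rpow_eq_zero_iff] at this
      rcases this with ⟨h0, _⟩ | ⟨h0, _⟩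
      · exact hne (by simpa using h0)
      · simp at h0
    have hf0 : ∀ᵐ ω ∂P, f ω = 0 := by
      filter_upwards [hf, ae_all_iff.2 hg0] with ω hω hg0ω
      have : (fun j => g j ω) = fun _ => (0 : X) := funext fun j => hg0ω j
      rw [this] at hω
      exact hω.unique hasSum_zero
    calc eLpNorm f (ENNReal.ofReal p) P = 0 := by
          rw [eLpNorm_congr_ae hf0]
          simp
      _ ≤ _ := zero_le
  push_neg at hA
  obtain ⟨k₀, hk₀⟩ := hA
  have hapos : 0 < ∑' k, |a k| :=
    lt_of_lt_of_le (abs_pos.2 hk₀) (Summable.le_tsum ha k₀ fun _ _ => abs_nonneg _)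
  have hofa : ENNReal.ofReal (∑' k, |a k|) ≠ 0 := by
    simp [ENNReal.ofReal_eq_zero, not_le, hapos]
  set T := ∑' j, eLpNorm (g j) (ENNReal.ofReal p) P ^ p with hT
  by_cases hTtop : T = ∞
  · rw [hTtop, ENNReal.top_rpow_of_pos (by positivity), ENNReal.mul_top hofa]
    exact le_top
  have hQfin : ∀ j, eLpNorm (g j) (ENNReal.ofReal p) P ^ p ≠ ∞ :=
    fun j => ne_top_of_le_ne_top hTtop (ENNReal.le_tsum j)
  -- summability of |a k| ^ p
  have hAp : (∑' k, ENNReal.ofReal (|a k| ^ p)) ≠ ∞ := by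
    have htend : Filter.Tendsto (fun k => |a k|) Filter.atTop (nhds 0) :=
      ha.tendsto_atTop_zero
    obtain ⟨N, hN⟩ := (htend.eventually (eventually_le_nhds one_pos)).exists_forall_of_atTop
    have hsum' : Summable fun k => |a (k + N)| ^ p := by
      refine Summable.of_nonneg_of_le (fun k => by positivity) (fun k => ?_)
        ((summable_nat_add_iff N).2 ha)
      rcases eq_or_lt_of_le (abs_nonneg (a (k + N))) with h0 | h0
      · rw [← h0, Real.zero_rpow hp0.ne']
      · calc |a (k + N)| ^ p ≤ |a (k + N)| ^ (1 : ℝ) :=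
              Real.rpow_le_rpow_of_exponent_ge h0 (hN (k + N) (Nat.le_add_left N k)) hp
          _ = |a (k + N)| := Real.rpow_one _
    have hsum : Summable fun k => |a k| ^ p := (summable_nat_add_iff N).1 hsum'
    rw [← ENNReal.ofReal_tsum_of_nonneg (fun k => by positivity) hsum]
    exact ENNReal.ofReal_ne_top
  -- disjointified sets
  set E : ℕ → Set Ω := fun m => D m \ ⋃ l, ⋃ (_ : m < l), D l with hE
  have hEmeas : ∀ m, MeasurableSet (E m) :=
    fun m => (hDmeas m).diff
      (MeasurableSet.iUnion fun l => MeasurableSet.iUnion fun _ => hDmeas l)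
  have hEmem : ∀ m ω, ω ∈ E m ↔ ω ∈ D m ∧ ∀ l, m < l → ω ∉ D l := by
    intro m ω
    simp [hE, Set.mem_diff, Set.mem_iUnion, not_exists]
  set Einf : Set Ω := ⋂ N, U N with hEinf
  -- a.e. vanishing on Einf
  have h2 : ∀ j, ∀ᵐ ω ∂P, ω ∈ Einf → g j ω = 0 := by
    intro j
    have hle : ∀ N : ℕ, (∫⁻ ω in Einf, (‖g j ω‖₊ : ℝ≥0∞) ^ p ∂P) ≤
        (∑' k : ℕ, ENNReal.ofReal (|a (k + N)| ^ p)) *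
          eLpNorm (g j) (ENNReal.ofReal p) P ^ p := by
      intro N
      have hsub : Einf ⊆ ⋃ i, D (i + N + j) := by
        intro ω hω
        have hωU : ω ∈ U (N + j) := by
          rw [hEinf, Set.mem_iInter] at hω
          exact hω (N + j)
        simp only [hU, Set.mem_iUnion] at hωU ⊢
        obtain ⟨k, hk, hωk⟩ := hωU
        refine ⟨k - (N + j), ?_⟩
        have hkk : k - (N + j) + N + j = k := by omega
        rwa [hkk]
      calc (∫⁻ ω in Einf, (‖g j ω‖₊ : ℝ≥0∞) ^ p ∂P)
          ≤ ∫⁻ ω in ⋃ i, D (i + N + j), (‖g j ω‖₊ : ℝ≥0∞) ^ p ∂P :=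
            lintegral_mono_set hsub
        _ ≤ ∑' i, ∫⁻ ω in D (i + N + j), (‖g j ω‖₊ : ℝ≥0∞) ^ p ∂P :=
            lintegral_iUnion_le _ _
        _ ≤ ∑' i, ENNReal.ofReal (|a (i + N)| ^ p) * eLpNorm (g j) (ENNReal.ofReal p) P ^ p :=
            ENNReal.tsum_le_tsum fun i => by
              have := hsmall (i + N) j
              simpa using this
        _ = (∑' i : ℕ, ENNReal.ofReal (|a (i + N)| ^ p)) *
              eLpNorm (g j) (ENNReal.ofReal p) P ^ p := ENNReal.tsum_mul_right
    have htail : Filter.Tendsto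
        (fun N => (∑' k : ℕ, ENNReal.ofReal (|a (k + N)| ^ p)) *
          eLpNorm (g j) (ENNReal.ofReal p) P ^ p) Filter.atTop (nhds 0) := by
      have h0 := ENNReal.tendsto_sum_nat_add (fun k => ENNReal.ofReal (|a k| ^ p)) hAp
      have := ENNReal.Tendsto.mul_const h0 (Or.inr (hQfin j))
      simpa using this
    have hint0 : (∫⁻ ω in Einf, (‖g j ω‖₊ : ℝ≥0∞) ^ p ∂P) = 0 :=
      le_antisymm (ge_of_tendsto' htail hle) zero_le
    have hae : ∀ᵐ ω ∂(P.restrict Einf), (‖g j ω‖₊ : ℝ≥0∞) ^ p = 0 :=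
      (lintegral_eq_zero_iff' (((hgmeas j).enorm.pow_const p).restrict)).mp hint0
    filter_upwards [ae_imp_of_ae_restrict hae] with ω hω hmem
    have := hω hmem
    rw [ENNReal.rpow_eq_zero_iff] at this
    rcases this with ⟨h0, _⟩ | ⟨h0, _⟩
    · simpa using h0
    · simp at h0
  -- the components
  set v : ℕ → Ω → ℝ≥0∞ :=
    fun k ω => ∑' m, (E (m + k)).indicator (fun ω => (‖g m ω‖₊ : ℝ≥0∞)) ω with hv
  have hvmeas : ∀ k, AEMeasurable (v k) P :=
    fun k => AEMeasurable.ennreal_tsum fun m => ((hgmeas m).enorm).indicator (hEmeas (m + k))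
  -- pointwise a.e. bound
  have hptwise : ∀ᵐ ω ∂P, (‖f ω‖₊ : ℝ≥0∞) ≤ ∑' k, v k ω := by
    filter_upwards [h1, ae_all_iff.2 h2, hf] with ω hω1 hω2 hω3
    by_cases hωinf : ω ∈ Einf
    · have hzero : (fun j => g j ω) = fun _ => (0 : X) := funext fun j => hω2 j hωinf
      rw [hzero] at hω3
      have : f ω = 0 := hω3.unique hasSum_zero
      simp [this]
    by_cases hωD : ∃ k, ω ∈ D k
    · -- find the largest index
      obtain ⟨k₁, hk₁⟩ := hωD
      have hnotU : ∃ N, ω ∉ U N := by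
        by_contra hcon
        push_neg at hcon
        exact hωinf (Set.mem_iInter.2 hcon)
      obtain ⟨N, hN⟩ := hnotU
      have hNbig : ∀ k, N ≤ k → ω ∉ D k := by
        intro k hk hωk
        exact hN (Set.mem_iUnion.2 ⟨k, Set.mem_iUnion.2 ⟨hk, hωk⟩⟩)
      set m := Nat.findGreatest (fun k => ω ∈ D k) N with hmdef
      have hk₁N : k₁ ≤ N := by
        by_contra hcon
        exact hNbig k₁ (le_of_lt (not_le.1 hcon)) hk₁
      have hm : ω ∈ D m := Nat.findGreatest_spec (P := fun k => ω ∈ D k) hk₁N hk₁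
      have hmax : ∀ l, m < l → ω ∉ D l := by
        intro l hl hωl
        rcases le_or_gt l N with hlN | hlN
        · exact Nat.findGreatest_is_greatest (P := fun k => ω ∈ D k) hl hlN hωl
        · exact hNbig l hlN.le hωl
      have hEm : ω ∈ E m := (hEmem m ω).2 ⟨hm, hmax⟩
      have hgzero : ∀ j, m < j → g j ω = 0 := by
        intro j hj
        by_contra hne
        have hωU := hω1 j hne
        simp only [hU, Set.mem_iUnion] at hωU
        obtain ⟨k, hk, hωk⟩ := hωU
        exact hmax k (lt_of_lt_of_le hj hk) hωk
      have hfs : HasSum (fun j => g j ω) (∑ j ∈ Finset.range (m + 1), g j ω) :=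
        hasSum_sum_of_ne_finset_zero fun j hj =>
          hgzero j (by simpa [Nat.lt_succ_iff, not_le] using hj)
      have hfval : f ω = ∑ j ∈ Finset.range (m + 1), g j ω := hω3.unique hfs
      have hvval : ∀ k, k ≤ m → v k ω = (‖g (m - k) ω‖₊ : ℝ≥0∞) := by
        intro k hk
        have huniq : ∀ m', m' ≠ m - k →
            (E (m' + k)).indicator (fun ω => (‖g m' ω‖₊ : ℝ≥0∞)) ω = 0 := by
          intro m' hne
          refine Set.indicator_of_notMem ?_ _
          intro hmem
          rw [hEmem] at hmem
          obtain ⟨hD', hmax'⟩ := hmem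
          have h1' : m' + k ≤ m := by
            by_contra hcon
            exact hmax (m' + k) (not_le.1 hcon) hD'
          have h2' : m ≤ m' + k := by
            by_contra hcon
            exact hmax' m (not_le.1 hcon) hm
          omega
        simp only [hv]
        rw [tsum_eq_single (m - k) huniq]
        rw [Set.indicator_of_mem (by rwa [Nat.sub_add_cancel hk]) _]
      calc (‖f ω‖₊ : ℝ≥0∞)
          = (‖∑ j ∈ Finset.range (m + 1), g j ω‖₊ : ℝ≥0∞) := by rw [hfval]
        _ ≤ ∑ j ∈ Finset.range (m + 1), (‖g j ω‖₊ : ℝ≥0∞) := by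
            rw [← ENNReal.coe_finset_sum]
            exact ENNReal.coe_le_coe.2 (nnnorm_sum_le _ _)
        _ = ∑ k ∈ Finset.range (m + 1), (‖g (m - k) ω‖₊ : ℝ≥0∞) := by
            exact (Finset.sum_range_reflect (fun j => ((‖g j ω‖₊ : ℝ≥0∞))) (m + 1)).symm
        _ = ∑ k ∈ Finset.range (m + 1), v k ω :=
            Finset.sum_congr rfl fun k hk =>
              (hvval k (by simpa [Nat.lt_succ_iff] using hk)).symm
        _ ≤ ∑' k, v k ω := ENNReal.sum_le_tsum _
    · -- ω in no D k : all g j ω vanish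
      push_neg at hωD
      have hgzero : ∀ j, g j ω = 0 := by
        intro j
        by_contra hne
        have hωU := hω1 j hne
        simp only [hU, Set.mem_iUnion] at hωU
        obtain ⟨k, _, hωk⟩ := hωU
        exact hωD k hωk
      have hzero : (fun j => g j ω) = fun _ => (0 : X) := funext hgzero
      rw [hzero] at hω3
      have : f ω = 0 := hω3.unique hasSum_zero
      simp [this]
  -- bound on each component
  have hIk : ∀ k, (∫⁻ ω, v k ω ^ p ∂P) ≤ ENNReal.ofReal (|a k| ^ p) * T := by
    intro k
    have hpt : ∀ ω, v k ω ^ p =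
        ∑' m, (E (m + k)).indicator (fun ω => (‖g m ω‖₊ : ℝ≥0∞) ^ p) ω := by
      intro ω
      by_cases hex : ∃ m, ω ∈ E (m + k)
      · obtain ⟨m₀, hm₀⟩ := hex
        have huniq : ∀ m', m' ≠ m₀ → ω ∉ E (m' + k) := by
          intro m' hne hmem
          rw [hEmem] at hmem hm₀
          have h1' : m' + k < m₀ + k ∨ m₀ + k < m' + k := by omega
          rcases h1' with h | h
          · exact hmem.2 _ h hm₀.1
          · exact hm₀.2 _ h hmem.1
        have hv1 : v k ω = (‖g m₀ ω‖₊ : ℝ≥0∞) := by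
          simp only [hv]
          rw [tsum_eq_single m₀
            (fun m' hne => Set.indicator_of_notMem (huniq m' hne) _),
            Set.indicator_of_mem hm₀]
        rw [hv1, tsum_eq_single m₀
          (fun m' hne => Set.indicator_of_notMem (huniq m' hne) _),
          Set.indicator_of_mem hm₀]
      · push_neg at hex
        have hv0 : v k ω = 0 := by
          simp only [hv]
          rw [tsum_congr (fun m => Set.indicator_of_notMem (hex m) _), tsum_zero]
        rw [hv0, ENNReal.zero_rpow_of_pos hp0,
          tsum_congr (fun m => Set.indicator_of_notMem (hex m) _), tsum_zero]
    calc (∫⁻ ω, v k ω ^ p ∂P)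
        = ∫⁻ ω, ∑' m, (E (m + k)).indicator (fun ω => (‖g m ω‖₊ : ℝ≥0∞) ^ p) ω ∂P :=
          lintegral_congr hpt
      _ = ∑' m, ∫⁻ ω, (E (m + k)).indicator (fun ω => (‖g m ω‖₊ : ℝ≥0∞) ^ p) ω ∂P :=
          lintegral_tsum fun m => ((hgmeas m).enorm.pow_const p).indicator (hEmeas (m + k))
      _ = ∑' m, ∫⁻ ω in E (m + k), (‖g m ω‖₊ : ℝ≥0∞) ^ p ∂P :=
          tsum_congr fun m => lintegral_indicator (hEmeas (m + k)) _
      _ ≤ ∑' m, ∫⁻ ω in D (k + m), (‖g m ω‖₊ : ℝ≥0∞) ^ p ∂P :=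
          ENNReal.tsum_le_tsum fun m =>
            lintegral_mono_set (by rw [Nat.add_comm k m]; exact Set.diff_subset)
      _ ≤ ∑' m, ENNReal.ofReal (|a k| ^ p) * eLpNorm (g m) (ENNReal.ofReal p) P ^ p :=
          ENNReal.tsum_le_tsum fun m => hsmall k m
      _ = ENNReal.ofReal (|a k| ^ p) * T := ENNReal.tsum_mul_left
  -- put everything together
  calc eLpNorm f (ENNReal.ofReal p) P
      = (∫⁻ ω, (‖f ω‖₊ : ℝ≥0∞) ^ p ∂P) ^ (1 / p) := heLp f
    _ ≤ (∫⁻ ω, (∑' k, v k ω) ^ p ∂P) ^ (1 / p) := by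
        refine ENNReal.rpow_le_rpow ?_ (by positivity)
        refine lintegral_mono_ae (hptwise.mono fun ω hω => ?_)
        exact ENNReal.rpow_le_rpow hω hp0.le
    _ ≤ ∑' k, (∫⁻ ω, v k ω ^ p ∂P) ^ (1 / p) := aux_mink P hp v hvmeas
    _ ≤ ∑' k, ENNReal.ofReal |a k| * T ^ (1 / p) := by
        refine ENNReal.tsum_le_tsum fun k => ?_
        have h1' := ENNReal.rpow_le_rpow (hIk k) (by positivity : (0:ℝ) ≤ 1 / p)
        rw [ENNReal.mul_rpow_of_nonneg _ _ (by positivity : (0:ℝ) ≤ 1 / p)] at h1'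
        have h2' : (ENNReal.ofReal (|a k| ^ p)) ^ (1 / p) = ENNReal.ofReal |a k| := by
          rw [ENNReal.ofReal_rpow_of_nonneg (by positivity) (by positivity)]
          rw [← Real.rpow_mul (by positivity)]
          rw [mul_one_div, div_self hp0.ne', Real.rpow_one]
        rwa [h2'] at h1'
    _ = (∑' k, ENNReal.ofReal |a k|) * T ^ (1 / p) := ENNReal.tsum_mul_right
    _ = ENNReal.ofReal (∑' k, |a k|) * T ^ (1 / p) := by
        rw [ENNReal.ofReal_tsum_of_nonneg (fun k => abs_nonneg _) ha]
end
end

section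
/- Let 1 < p ≤ 2, let (Ω, F, (F_n), P) be a filtered atomic probability space with associated collection ℬ, and let M be a scalar martingale type p constant for (Ω, F, (F_n), P). Let R ⊆ ℬ, let A ∈ F, and let (x_{B̃})_{B̃ ∈ G_1(R, A)} be a family of vectors of a Banach space X for which the series ∑_{B̃ ∈ G_1(R, A)} x_{B̃} P(B̃) 1_{star(B)} converges almost everywhere. Then ‖∑_{B̃ ∈ G_1(R, A)} x_{B̃} P(B̃) 1_{star(B)}‖_{L^p(Ω;X)} ≤ 2^{1 − 1/p} (1 + M^p)^{1/p} (∑_{B̃ ∈ G_1(R, A)} ‖x_{B̃}‖^p ‖φ_B‖_{L^p(Ω)}^p)^{1/p}, where φ_B = P(B̃)·1_{star(B)} − P(star(B))·1_{B̃}. -/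
open MeasureTheory ENNReal

noncomputable section

namespace S13

open MeasureTheory Filter

variable {Ω : Type*} [m0 : MeasurableSpace Ω] {P : Measure Ω} (F : Paper.FilteredAtomic Ω P)

theorem filt_le (n : ℕ) : F.filt n ≤ m0 := by
  conv_rhs => rw [F.gen]
  exact le_iSup (fun k : ℕ => MeasurableSpace.generateFrom ((F.part k : Set (Set Ω)))) n

theorem meas_atom {n : ℕ} {A : Set Ω} (hA : A ∈ F.part n) :
    MeasurableSet[F.filt n] A :=
  MeasurableSpace.measurableSet_generateFrom (Finset.mem_coe.mpr hA)

theorem atom_eq_sUnion {n : ℕ} {A : Set Ω} (hA : A ∈ F.part n) :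
    A = ⋃₀ {C | C ∈ F.part (n + 1) ∧ C ⊆ A} := by
  apply Set.Subset.antisymm
  · intro ω hω
    have hcov : ω ∈ ⋃₀ ((F.part (n + 1) : Finset (Set Ω)) : Set (Set Ω)) := by
      rw [F.cover]; trivial
    obtain ⟨C, hC, hωC⟩ := hcov
    obtain ⟨B, hB, hCB⟩ := F.refined n C (Finset.mem_coe.mp hC)
    have hAB : A = B := by
      by_contra hne
      exact Set.disjoint_left.mp
        (F.disj n (Finset.mem_coe.mpr hA) (Finset.mem_coe.mpr hB) hne) hω (hCB hωC)
    exact ⟨C, ⟨Finset.mem_coe.mp hC, hAB ▸ hCB⟩, hωC⟩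
  · rintro ω ⟨C, ⟨-, hCA⟩, hωC⟩
    exact hCA hωC

theorem atom_meas_succ {n : ℕ} {A : Set Ω} (hA : A ∈ F.part n) :
    MeasurableSet[F.filt (n + 1)] A := by
  rw [atom_eq_sUnion F hA]
  refine MeasurableSet.sUnion ?_ ?_
  · exact ((F.part (n + 1)).finite_toSet.subset fun C hC => hC.1).countable
  · intro C hC
    exact MeasurableSpace.measurableSet_generateFrom (Finset.mem_coe.mpr hC.1)

theorem filt_mono : Monotone F.filt :=
  monotone_nat_of_le_succ fun n =>
    MeasurableSpace.generateFrom_le fun A hA => atom_meas_succ F (Finset.mem_coe.mp hA)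

theorem atom_nested : ∀ (k n : ℕ), ∀ A ∈ F.part n, ∀ C ∈ F.part (n + k),
    (A ∩ C).Nonempty → C ⊆ A := by
  intro k
  induction k with
  | zero =>
    intro n A hA C hC hne
    obtain ⟨ω, hω⟩ := hne
    rcases eq_or_ne A C with h | h
    · subst h; exact Set.Subset.rfl
    · exact absurd hω.2 (Set.disjoint_left.mp
        (F.disj n (Finset.mem_coe.mpr hA) (Finset.mem_coe.mpr hC) h) hω.1)
  | succ k ih =>
    intro n A hA C hC hne
    obtain ⟨ω, hω⟩ := hne
    obtain ⟨B, hB, hCB⟩ := F.refined (n + k) C hC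
    exact fun y hy => ih n A hA B hB ⟨ω, hω.1, hCB hω.2⟩ (hCB hy)

theorem tilde_subset {n₁ n₂ : ℕ} {B₁ B₂ : Set Ω} (h₁ : B₁ ∈ F.part n₁) (h₂ : B₂ ∈ F.part n₂)
    (hlt : n₁ < n₂) {ω : Ω} (hω₁ : ω ∈ B₁ \ F.star n₁ B₁) (hω₂ : ω ∈ B₂ \ F.star n₂ B₂) :
    B₂ \ F.star n₂ B₂ ⊆ B₁ \ F.star n₁ B₁ := by
  obtain ⟨k, rfl⟩ : ∃ k, n₂ = n₁ + k := ⟨n₂ - n₁, by omega⟩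
  have hB21 : B₂ ⊆ B₁ := atom_nested F k n₁ B₁ h₁ B₂ h₂ ⟨ω, hω₁.1, hω₂.1⟩
  have hcov : ω ∈ ⋃₀ ((F.part (n₁ + 1) : Finset (Set Ω)) : Set (Set Ω)) := by
    rw [F.cover]; trivial
  obtain ⟨C, hC, hωC⟩ := hcov
  have hBC : B₂ ⊆ C := by
    have hidx : n₁ + 1 + (k - 1) = n₁ + k := by omega
    refine atom_nested F (k - 1) (n₁ + 1) C (Finset.mem_coe.mp hC) B₂ ?_ ⟨ω, hωC, hω₂.1⟩
    rw [hidx]; exact h₂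
  have hCstar : C ≠ F.star n₁ B₁ := fun h => hω₁.2 (h ▸ hωC)
  have hdisj : Disjoint C (F.star n₁ B₁) :=
    F.disj (n₁ + 1) hC (Finset.mem_coe.mpr (F.star_mem n₁ B₁ h₁)) hCstar
  intro y hy
  exact ⟨hB21 hy.1, fun hys => Set.disjoint_left.mp hdisj (hBC hy.1) hys⟩

theorem atom_eq_of_tilde_mem {n : ℕ} {B₁ B₂ : Set Ω} (h₁ : B₁ ∈ F.part n) (h₂ : B₂ ∈ F.part n)
    {ω : Ω} (hω₁ : ω ∈ B₁ \ F.star n B₁) (hω₂ : ω ∈ B₂ \ F.star n B₂) : B₁ = B₂ := by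
  by_contra h
  exact Set.disjoint_left.mp
    (F.disj n (Finset.mem_coe.mpr h₁) (Finset.mem_coe.mpr h₂) h) hω₁.1 hω₂.1

/-- Every set measurable w.r.t. the `n`-th σ-algebra either contains or is disjoint from
each atom of the `n`-th partition. -/
theorem atom_subset_or_disjoint {n : ℕ} {s : Set Ω} (hs : MeasurableSet[F.filt n] s) :
    ∀ A ∈ F.part n, A ⊆ s ∨ Disjoint A s := by
  refine MeasurableSpace.generateFrom_induction
    (C := ((F.part n : Finset (Set Ω)) : Set (Set Ω)))
    (p := fun s _ => ∀ A ∈ F.part n, A ⊆ s ∨ Disjoint A s) ?_ ?_ ?_ ?_ s hs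
  · intro t ht _ A hA
    rcases eq_or_ne A t with h | h
    · exact Or.inl (h ▸ Set.Subset.rfl)
    · exact Or.inr (F.disj n (Finset.mem_coe.mpr hA) ht h)
  · intro A _
    exact Or.inr disjoint_bot_right
  · intro t _ ht A hA
    rcases ht A hA with h | h
    · exact Or.inr (Set.disjoint_left.mpr fun ω hω hωc => hωc (h hω))
    · exact Or.inl fun ω hω => Set.disjoint_left.mp h hω
  · intro t _ ht A hA
    by_cases hex : ∃ i, A ⊆ t i
    · obtain ⟨i, hi⟩ := hex
      exact Or.inl (hi.trans (Set.subset_iUnion t i))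
    · push_neg at hex
      refine Or.inr (Set.disjoint_iUnion_right.mpr fun i => ?_)
      rcases ht i A hA with h | h
      · exact absurd h (hex i)
      · exact h

end S13

namespace S13

open MeasureTheory Filter

variable {Ω : Type*} [m0 : MeasurableSpace Ω] {P : Measure Ω} (F : Paper.FilteredAtomic Ω P)
variable [IsProbabilityMeasure P]
variable {n : ℕ} {B b : Set Ω}

/-- The function `ψ = P(b)·1_{star B} - P(star B)·1_b`. -/
def psi (P : Measure Ω) (F : Paper.FilteredAtomic Ω P) (n : ℕ) (B b : Set Ω) : Ω → ℝ :=
  fun ω => (P b).toReal * Set.indicator (F.star n B) (fun _ => (1 : ℝ)) ω -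
    (P (F.star n B)).toReal * Set.indicator b (fun _ => (1 : ℝ)) ω

theorem psi_eq_indicator_sub :
    psi P F n B b = fun ω => Set.indicator (F.star n B) (fun _ => (P b).toReal) ω -
      Set.indicator b (fun _ => (P (F.star n B)).toReal) ω := by
  funext ω
  by_cases h1 : ω ∈ F.star n B <;> by_cases h2 : ω ∈ b <;> simp [psi, h1, h2]

theorem star_meas (hB : B ∈ F.part n) : MeasurableSet (F.star n B) := F.meas (n + 1) _ (F.star_mem n B hB)

theorem b_meas (hB : B ∈ F.part n) (hb : b = B \ F.star n B) : MeasurableSet b := hb ▸ ((F.meas n B hB).diff (star_meas F hB))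

theorem psi_memℒp (hB : B ∈ F.part n) (hb : b = B \ F.star n B) (q : ℝ≥0∞) : MemLp (psi P F n B b) q P := by
  rw [psi_eq_indicator_sub]
  exact MemLp.sub
    (memLp_indicator_const q (star_meas F hB) _ (Or.inr (measure_ne_top P _)))
    (memLp_indicator_const q (b_meas F hB hb) _ (Or.inr (measure_ne_top P _)))

theorem psi_integrable (hB : B ∈ F.part n) (hb : b = B \ F.star n B) : Integrable (psi P F n B b) P :=
  (psi_memℒp F hB hb 1).integrable le_rfl

theorem psi_support (hB : B ∈ F.part n) (hb : b = B \ F.star n B) {ω : Ω} (hω : ω ∉ B) : psi P F n B b ω = 0 := by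
  have h1 : ω ∉ F.star n B := fun h => hω (F.star_sub n B hB h)
  have h2 : ω ∉ b := fun h => hω (hb ▸ h : ω ∈ B \ F.star n B).1
  simp [psi, h1, h2]

theorem psi_on_b (hb : b = B \ F.star n B) {ω : Ω} (hω : ω ∈ b) : psi P F n B b ω = -(P (F.star n B)).toReal := by
  have h1 : ω ∉ F.star n B := (hb ▸ hω : ω ∈ B \ F.star n B).2
  simp [psi, h1, hω]

theorem psi_setIntegral (hB : B ∈ F.part n) (hb : b = B \ F.star n B) (s : Set Ω) (hs : MeasurableSet[F.filt n] s) :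
    ∫ ω in s, psi P F n B b ω ∂P = 0 := by
  have hS : MeasurableSet (F.star n B) := star_meas F hB
  have hbm : MeasurableSet b := b_meas F hB hb
  have h1 : ∫ ω in s, psi P F n B b ω ∂P =
      (P (F.star n B ∩ s)).toReal * (P b).toReal - (P (b ∩ s)).toReal * (P (F.star n B)).toReal := by
    rw [psi_eq_indicator_sub]
    rw [integral_sub
      ((integrable_const _).indicator hS).integrableOn.integrable
      ((integrable_const _).indicator hbm).integrableOn.integrable]
    rw [integral_indicator_const _ hS, integral_indicator_const _ hbm,
      measureReal_restrict_apply hS, measureReal_restrict_apply hbm]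
    simp [mul_comm, measureReal_def]
  rcases atom_subset_or_disjoint F hs B hB with h | h
  · have hSs : F.star n B ∩ s = F.star n B :=
      Set.inter_eq_self_of_subset_left ((F.star_sub n B hB).trans h)
    have hbs : b ∩ s = b :=
      Set.inter_eq_self_of_subset_left ((hb ▸ Set.diff_subset).trans h)
    rw [h1, hSs, hbs]; ring
  · have hSs : F.star n B ∩ s = ∅ := (h.mono_left (F.star_sub n B hB)).inter_eq
    have hbs : b ∩ s = ∅ := (h.mono_left (hb ▸ Set.diff_subset)).inter_eq
    rw [h1, hSs, hbs]; simp

theorem psi_integral (hB : B ∈ F.part n) (hb : b = B \ F.star n B) : ∫ ω, psi P F n B b ω ∂P = 0 := by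
  have := psi_setIntegral F hB hb Set.univ MeasurableSet.univ
  rwa [Measure.restrict_univ] at this

theorem psi_condexp_self (hB : B ∈ F.part n) (hb : b = B \ F.star n B) : P[psi P F n B b|F.filt n] =ᵐ[P] 0 := by
  refine (ae_eq_condExp_of_forall_setIntegral_eq (filt_le F n) (psi_integrable F hB hb)
    (fun s _ _ => (integrable_zero _ _ _).integrableOn) (fun s hs _ => ?_)
    (stronglyMeasurable_const.aestronglyMeasurable)).symm
  rw [psi_setIntegral F hB hb s hs]
  simp

theorem psi_stronglyMeasurable (hB : B ∈ F.part n) (hb : b = B \ F.star n B) {m : ℕ} (hm : n + 1 ≤ m) :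
    StronglyMeasurable[F.filt m] (psi P F n B b) := by
  have hS : MeasurableSet[F.filt m] (F.star n B) :=
    filt_mono F hm _ (meas_atom F (F.star_mem n B hB))
  have hB' : MeasurableSet[F.filt m] B :=
    filt_mono F ((Nat.le_succ n).trans hm) _ (meas_atom F hB)
  have hb' : MeasurableSet[F.filt m] b := hb ▸ hB'.diff hS
  rw [psi_eq_indicator_sub]
  exact (stronglyMeasurable_const.indicator hS).sub (stronglyMeasurable_const.indicator hb')

theorem psi_condexp_of_le (hB : B ∈ F.part n) (hb : b = B \ F.star n B) {m : ℕ} (hm : n + 1 ≤ m) :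
    P[psi P F n B b|F.filt m] = psi P F n B b :=
  condExp_of_stronglyMeasurable (filt_le F m) (psi_stronglyMeasurable F hB hb hm)
    (psi_integrable F hB hb)

theorem psi_condexp_of_ge (hB : B ∈ F.part n) (hb : b = B \ F.star n B) {m : ℕ} (hm : m ≤ n) :
    P[psi P F n B b|F.filt m] =ᵐ[P] 0 := by
  have h1 : P[P[psi P F n B b|F.filt n]|F.filt m] =ᵐ[P] P[psi P F n B b|F.filt m] :=
    condExp_condExp_of_le (filt_mono F hm) (filt_le F n)
  refine h1.symm.trans ?_
  refine (condExp_congr_ae (psi_condexp_self F hB hb)).trans ?_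
  rw [condExp_zero]

theorem psi_mdiff_self (hB : B ∈ F.part n) (hb : b = B \ F.star n B) : F.mdiff (psi P F n B b) n =ᵐ[P] psi P F n B b := by
  show P[psi P F n B b|F.filt (n+1)] - P[psi P F n B b|F.filt n] =ᵐ[P] psi P F n B b
  rw [psi_condexp_of_le F hB hb le_rfl]
  filter_upwards [psi_condexp_of_ge F hB hb le_rfl] with ω hω
  simp [hω]

theorem psi_mdiff_of_ne (hB : B ∈ F.part n) (hb : b = B \ F.star n B) {m : ℕ} (hm : m ≠ n) : F.mdiff (psi P F n B b) m =ᵐ[P] 0 := by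
  show P[psi P F n B b|F.filt (m+1)] - P[psi P F n B b|F.filt m] =ᵐ[P] 0
  rcases lt_or_gt_of_ne hm with h | h
  · filter_upwards [psi_condexp_of_ge F hB hb (Nat.succ_le_of_lt h),
      psi_condexp_of_ge F hB hb h.le] with ω h1 h2
    simp [h1, h2]
  · rw [psi_condexp_of_le F hB hb h, psi_condexp_of_le F hB hb (Nat.succ_le_succ h.le)]
    simp

end S13

namespace S13

open MeasureTheory Filter
open scoped NNReal

variable {Ω : Type*} [m0 : MeasurableSpace Ω] {P : Measure Ω}

theorem eLpNorm_rpow_eq_lintegral {p : ℝ} (hp : 0 < p) (f : Ω → ℝ) :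
    eLpNorm f (ENNReal.ofReal p) P ^ p = ∫⁻ ω, (‖f ω‖₊ : ℝ≥0∞) ^ p ∂P := by
  have hq0 : ENNReal.ofReal p ≠ 0 := by
    simp [ENNReal.ofReal_eq_zero, not_le, hp]
  rw [eLpNorm_eq_lintegral_rpow_enorm_toReal hq0 ENNReal.ofReal_ne_top,
    ENNReal.toReal_ofReal hp.le, ← ENNReal.rpow_mul, one_div_mul_cancel hp.ne',
    ENNReal.rpow_one]
  rfl

theorem eLpNorm_rpow_sum_of_disjoint {ι : Type*} (s : Finset ι) (g : ι → Ω → ℝ)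
    (hmeas : ∀ i ∈ s, Measurable (g i))
    (hdisj : ∀ i ∈ s, ∀ j ∈ s, i ≠ j → ∀ ω, g i ω ≠ 0 → g j ω = 0)
    {p : ℝ} (hp : 0 < p) :
    eLpNorm (fun ω => ∑ i ∈ s, g i ω) (ENNReal.ofReal p) P ^ p
      = ∑ i ∈ s, eLpNorm (g i) (ENNReal.ofReal p) P ^ p := by
  rw [eLpNorm_rpow_eq_lintegral hp]
  have hptw : ∀ ω, (‖∑ i ∈ s, g i ω‖₊ : ℝ≥0∞) ^ p = ∑ i ∈ s, (‖g i ω‖₊ : ℝ≥0∞) ^ p := by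
    intro ω
    by_cases hex : ∃ i ∈ s, g i ω ≠ 0
    · obtain ⟨i₀, hi₀, hne⟩ := hex
      rw [Finset.sum_eq_single_of_mem i₀ hi₀
          (fun j hj hji => hdisj i₀ hi₀ j hj (Ne.symm hji) ω hne),
        Finset.sum_eq_single_of_mem i₀ hi₀
          (fun j hj hji => by
            rw [hdisj i₀ hi₀ j hj (Ne.symm hji) ω hne]
            simp [ENNReal.zero_rpow_of_pos hp])]
    · push_neg at hex
      rw [Finset.sum_eq_zero hex, Finset.sum_eq_zero
        (fun j hj => by rw [hex j hj]; simp [ENNReal.zero_rpow_of_pos hp])]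
      simp [ENNReal.zero_rpow_of_pos hp]
  calc ∫⁻ ω, (‖∑ i ∈ s, g i ω‖₊ : ℝ≥0∞) ^ p ∂P
      = ∫⁻ ω, ∑ i ∈ s, (‖g i ω‖₊ : ℝ≥0∞) ^ p ∂P := lintegral_congr hptw
    _ = ∑ i ∈ s, ∫⁻ ω, (‖g i ω‖₊ : ℝ≥0∞) ^ p ∂P :=
        lintegral_finset_sum' s fun i hi => ((hmeas i hi).nnnorm.coe_nnreal_ennreal.pow_const p).aemeasurable
    _ = ∑ i ∈ s, eLpNorm (g i) (ENNReal.ofReal p) P ^ p := by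
        exact Finset.sum_congr rfl fun i _ => (eLpNorm_rpow_eq_lintegral hp (g i)).symm

theorem const_ineq {p M : ℝ} (hp1 : 1 < p) (hM : 0 ≤ M) :
    1 + M ≤ (2 : ℝ) ^ (1 - 1 / p) * (1 + M ^ p) ^ (1 / p) := by
  have hp0 : (0 : ℝ) < p := lt_trans one_pos hp1
  have h1 : ((1 : ℝ≥0) + M.toNNReal) ^ p ≤ 2 ^ (p - 1) * (1 ^ p + M.toNNReal ^ p) :=
    NNReal.rpow_add_le_mul_rpow_add_rpow 1 M.toNNReal hp1.le
  have hr : (1 + M) ^ p ≤ 2 ^ (p - 1) * (1 + M ^ p) := by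
    have h1' := (NNReal.coe_le_coe).mpr h1
    push_cast [NNReal.coe_rpow] at h1'
    rw [Real.coe_toNNReal M hM] at h1'
    simpa [Real.one_rpow] using h1'
  have h1M : (0 : ℝ) ≤ 1 + M := by linarith
  calc 1 + M = ((1 + M) ^ p) ^ (1 / p) := by
        rw [← Real.rpow_mul h1M, mul_one_div_cancel hp0.ne', Real.rpow_one]
    _ ≤ (2 ^ (p - 1) * (1 + M ^ p)) ^ (1 / p) :=
        Real.rpow_le_rpow (Real.rpow_nonneg h1M p) hr (by positivity)
    _ = (2 ^ (p - 1)) ^ (1 / p) * (1 + M ^ p) ^ (1 / p) := by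
        rw [Real.mul_rpow (by positivity) (by positivity)]
    _ = 2 ^ (1 - 1 / p) * (1 + M ^ p) ^ (1 / p) := by
        rw [← Real.rpow_mul (by norm_num : (0:ℝ) ≤ 2)]
        congr 1
        field_simp

end S13

open MeasureTheory ENNReal in
/-- single-generation estimate, Lemma `singlecol`.  The function
`sel` selects for each `B̃ ∈ G_1(R,A) ⊆ ℬ` an occurrence `(n, B)` with `B ∈ 𝒜_n` and
`B̃ = B \ star B`, so that `F.star (sel B̃).1 (sel B̃).2` is `star(B)`. -/
theorem statement_13 {Ω : Type*} [m0 : MeasurableSpace Ω] (P : Measure Ω)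
    [IsProbabilityMeasure P] (F : Paper.FilteredAtomic Ω P)
    (p : ℝ) (hp1 : 1 < p) (hp2 : p ≤ 2)
    (M : ℝ) (hM : Paper.ScalarMT F p M)
    (R : Set (Set Ω)) (hR : R ⊆ F.bColl)
    (A : Set Ω) (hA : MeasurableSet A)
    (sel : Set Ω → ℕ × Set Ω)
    (hsel : ∀ B ∈ Paper.G1 R A,
      (sel B).2 ∈ F.part (sel B).1 ∧ B = (sel B).2 \ F.star (sel B).1 (sel B).2)
    (X : Type*) [NormedAddCommGroup X] [NormedSpace ℝ X] [CompleteSpace X]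
    (x : Set Ω → X) (f : Ω → X)
    (hf : ∀ᵐ ω ∂P, HasSum (fun B : Paper.G1 R A =>
      (P (B : Set Ω)).toReal •
        Set.indicator (F.star (sel (B : Set Ω)).1 (sel (B : Set Ω)).2)
          (fun _ => x (B : Set Ω)) ω) (f ω)) :
    eLpNorm f (ENNReal.ofReal p) P ≤
      ENNReal.ofReal ((2 : ℝ) ^ (1 - 1 / p) * (1 + M ^ p) ^ (1 / p)) *
        (∑' B : Paper.G1 R A, (‖x (B : Set Ω)‖₊ : ℝ≥0∞) ^ p *
          eLpNorm (fun ω =>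
              (P (B : Set Ω)).toReal *
                Set.indicator (F.star (sel (B : Set Ω)).1 (sel (B : Set Ω)).2)
                  (fun _ => (1 : ℝ)) ω -
              (P (F.star (sel (B : Set Ω)).1 (sel (B : Set Ω)).2)).toReal *
                Set.indicator (B : Set Ω) (fun _ => (1 : ℝ)) ω)
            (ENNReal.ofReal p) P ^ p) ^ (1 / p) := by
  classical
  have hp0 : (0 : ℝ) < p := lt_trans one_pos hp1
  set q : ℝ≥0∞ := ENNReal.ofReal p with hqdef
  have hq1 : (1 : ℝ≥0∞) ≤ q := by
    rw [hqdef, ← ENNReal.ofReal_one]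
    exact ENNReal.ofReal_le_ofReal hp1.le
  have hsel' : ∀ b : Paper.G1 R A, (sel (b : Set Ω)).2 ∈ F.part (sel (b : Set Ω)).1 ∧
      (b : Set Ω) = (sel (b : Set Ω)).2 \ F.star (sel (b : Set Ω)).1 (sel (b : Set Ω)).2 :=
    fun b => hsel b.1 b.2
  let lvl : Paper.G1 R A → ℕ := fun b => (sel (b : Set Ω)).1
  let atm : Paper.G1 R A → Set Ω := fun b => (sel (b : Set Ω)).2
  let st : Paper.G1 R A → Set Ω := fun b => F.star (lvl b) (atm b)
  let ψ : Paper.G1 R A → Ω → ℝ := fun b => S13.psi P F (lvl b) (atm b) (b : Set Ω)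
  let term : Paper.G1 R A → Ω → X := fun b ω =>
    (P (b : Set Ω)).toReal • Set.indicator (st b) (fun _ => x (b : Set Ω)) ω
  have hatm : ∀ b, atm b ∈ F.part (lvl b) := fun b => (hsel' b).1
  have hbe : ∀ b : Paper.G1 R A, (b : Set Ω) = atm b \ st b := fun b => (hsel' b).2
  have hb_meas : ∀ b : Paper.G1 R A, MeasurableSet (b : Set Ω) := fun b => S13.b_meas F (hatm b) (hbe b)
  have hst_meas : ∀ b, MeasurableSet (st b) := fun b => S13.star_meas F (hatm b)
  -- pairwise disjointness of the members of `G1 R A`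
  have hdisjb : ∀ b c : Paper.G1 R A, b ≠ c → ∀ ω, ω ∈ (b : Set Ω) → ω ∉ (c : Set Ω) := by
    intro b c hbc ω hωb hωc
    have hωb' : ω ∈ atm b \ st b := (hbe b) ▸ hωb
    have hωc' : ω ∈ atm c \ st c := (hbe c) ▸ hωc
    have hne : (b : Set Ω) ≠ (c : Set Ω) := fun h => hbc (Subtype.ext h)
    rcases lt_trichotomy (lvl b) (lvl c) with h | h | h
    · have hsub : atm c \ st c ⊆ atm b \ st b :=
        S13.tilde_subset F (hatm b) (hatm c) h hωb' hωc'
      have hcb : (c : Set Ω) ⊆ (b : Set Ω) := by rw [hbe b, hbe c]; exact hsub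
      exact hne ((c.2.2.2 (b : Set Ω) b.2.1 b.2.2.1 hcb).symm)
    · have h2 : atm c ∈ F.part (lvl b) := by rw [h]; exact hatm c
      have hωc'' : ω ∈ atm c \ F.star (lvl b) (atm c) := by rw [h]; exact hωc'
      have hBeq : atm b = atm c := S13.atom_eq_of_tilde_mem F (hatm b) h2 hωb' hωc''
      apply hne
      rw [hbe b, hbe c]
      have hstar : F.star (lvl b) (atm b) = F.star (lvl c) (atm c) := by rw [hBeq, h]
      rw [show st b = F.star (lvl b) (atm b) from rfl, hstar, hBeq]
    · have hsub : atm b \ st b ⊆ atm c \ st c :=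
        S13.tilde_subset F (hatm c) (hatm b) h hωc' hωb'
      have hbc' : (b : Set Ω) ⊆ (c : Set Ω) := by rw [hbe b, hbe c]; exact hsub
      exact hne (b.2.2.2 (c : Set Ω) c.2.1 c.2.2.1 hbc')
  -- countability
  have hcnt : (Paper.G1 R A).Countable := by
    have h1 : Paper.G1 R A ⊆ ⋃ n, (fun B => B \ F.star n B) ''
        ((F.part n : Finset (Set Ω)) : Set (Set Ω)) := by
      intro b hb
      obtain ⟨⟨nn, BB, hBB, hEq⟩, -⟩ := hR hb.1
      exact Set.mem_iUnion.mpr ⟨nn, ⟨BB, Finset.mem_coe.mpr hBB, hEq.symm⟩⟩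
    exact (Set.countable_iUnion fun n =>
      (((F.part n).finite_toSet).image _).countable).mono h1
  haveI : Countable (Paper.G1 R A) := hcnt.to_subtype
  -- exhaustion by finsets
  obtain ⟨Λ, hΛmono, hΛtop⟩ :=
    Filter.exists_seq_monotone_tendsto_atTop_atTop (Finset (Paper.G1 R A))
  let fS : Finset (Paper.G1 R A) → Ω → X := fun s ω => ∑ b ∈ s, term b ω
  have hterm_sm : ∀ b, StronglyMeasurable (term b) := fun b =>
    (stronglyMeasurable_const.indicator (hst_meas b)).const_smul _
  have hfS_meas : ∀ s : Finset (Paper.G1 R A), AEStronglyMeasurable (fS s) P := by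
    intro s
    have he : fS s = ∑ b ∈ s, term b := by ext ω; simp [fS]
    rw [he]
    exact Finset.aestronglyMeasurable_sum s fun b _ => (hterm_sm b).aestronglyMeasurable
  have htend : ∀ᵐ ω ∂P, Filter.Tendsto (fun k => fS (Λ k) ω) Filter.atTop (nhds (f ω)) := by
    filter_upwards [hf] with ω hω
    exact hω.comp hΛtop
  have hf_meas : AEStronglyMeasurable f P :=
    aestronglyMeasurable_of_tendsto_ae Filter.atTop (fun k => hfS_meas (Λ k)) htend
  have hFatou : eLpNorm f q P ≤ Filter.atTop.liminf fun k => eLpNorm (fS (Λ k)) q P :=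
    Lp.eLpNorm_lim_le_liminf_eLpNorm (fun k => hfS_meas (Λ k)) f htend
  have hψ_meas : ∀ b, Measurable (ψ b) := fun b =>
    ((measurable_const.indicator (hst_meas b)).const_mul _).sub
      ((measurable_const.indicator (hb_meas b)).const_mul _)
  -- the single-finset estimate
  have hmain : ∀ s : Finset (Paper.G1 R A),
      eLpNorm (fS s) q P ≤ (ENNReal.ofReal M + 1) *
        (∑ b ∈ s, (‖x (b : Set Ω)‖₊ : ℝ≥0∞) ^ p * eLpNorm (ψ b) q P ^ p) ^ (1 / p) := by
    intro s
    set Ssum := ∑ b ∈ s, (‖x (b : Set Ω)‖₊ : ℝ≥0∞) ^ p * eLpNorm (ψ b) q P ^ p with hSsum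
    let gfun : Ω → ℝ := fun ω => ∑ b ∈ s, ‖x (b : Set Ω)‖ * ψ b ω
    let wfun : Ω → ℝ := fun ω => ∑ b ∈ s,
      ‖x (b : Set Ω)‖ * ((P (st b)).toReal * Set.indicator (b : Set Ω) (fun _ => (1 : ℝ)) ω)
    have hg_meas : Measurable gfun :=
      Finset.measurable_sum s fun b _ => (hψ_meas b).const_mul _
    have hw_meas : Measurable wfun :=
      Finset.measurable_sum s fun b _ =>
        ((measurable_const.indicator (hb_meas b)).const_mul _).const_mul _
    -- pointwise triangle bound
    have hpt : ∀ ω, ‖fS s ω‖ ≤ gfun ω + wfun ω := by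
      intro ω
      have h1 : gfun ω + wfun ω = ∑ b ∈ s,
          ‖x (b : Set Ω)‖ * ((P (b : Set Ω)).toReal *
            Set.indicator (st b) (fun _ => (1 : ℝ)) ω) := by
        rw [← Finset.sum_add_distrib]
        refine Finset.sum_congr rfl fun b _ => ?_
        simp only [ψ, S13.psi]
        ring
      rw [h1]
      refine (norm_sum_le _ _).trans (le_of_eq (Finset.sum_congr rfl fun b _ => ?_))
      by_cases hω : ω ∈ st b
      · simp only [term, Set.indicator_of_mem hω, norm_smul,
          Real.norm_of_nonneg ENNReal.toReal_nonneg]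
        ring
      · simp [term, Set.indicator_of_notMem hω]
    have h2 : eLpNorm (fS s) q P ≤ eLpNorm gfun q P + eLpNorm wfun q P := by
      have h3 : eLpNorm (fS s) q P ≤ eLpNorm (fun ω => gfun ω + wfun ω) q P := by
        refine eLpNorm_mono fun ω => ?_
        rw [Real.norm_eq_abs]
        exact (hpt ω).trans (le_abs_self _)
      exact h3.trans
        (eLpNorm_add_le hg_meas.aestronglyMeasurable hw_meas.aestronglyMeasurable hq1)
    -- bound for `wfun`
    have hw : eLpNorm wfun q P ≤ Ssum ^ (1 / p) := by
      have hw_eq : eLpNorm wfun q P ^ p = ∑ b ∈ s, eLpNorm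
          (fun ω => ‖x (b : Set Ω)‖ * ((P (st b)).toReal *
            Set.indicator (b : Set Ω) (fun _ => (1 : ℝ)) ω)) q P ^ p := by
        rw [hqdef]
        refine S13.eLpNorm_rpow_sum_of_disjoint s _
          (fun b _ => ((measurable_const.indicator (hb_meas b)).const_mul _).const_mul _)
          ?_ hp0
        intro b _ c _ hbc ω hbne
        have hωb : ω ∈ (b : Set Ω) := by
          by_contra hωb
          exact hbne (by simp [Set.indicator_of_notMem hωb])
        have hωc := hdisjb b c hbc ω hωb
        simp [Set.indicator_of_notMem hωc]
      have hterm_le : ∀ b ∈ s, eLpNorm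
          (fun ω => ‖x (b : Set Ω)‖ * ((P (st b)).toReal *
            Set.indicator (b : Set Ω) (fun _ => (1 : ℝ)) ω)) q P
          ≤ (‖x (b : Set Ω)‖₊ : ℝ≥0∞) * eLpNorm (ψ b) q P := by
        intro b _
        have hmono : ∀ ω, ‖‖x (b : Set Ω)‖ * ((P (st b)).toReal *
            Set.indicator (b : Set Ω) (fun _ => (1 : ℝ)) ω)‖ ≤
            ‖‖x (b : Set Ω)‖ * ψ b ω‖ := by
          intro ω
          by_cases hω : ω ∈ (b : Set Ω)
          · have hv : ψ b ω = -(P (st b)).toReal := S13.psi_on_b F (hbe b) hω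
            rw [hv]
            simp [Set.indicator_of_mem hω, Real.norm_eq_abs, abs_mul]
          · simp only [Set.indicator_of_notMem hω, mul_zero, norm_zero, Real.norm_eq_abs]
            positivity
        refine (eLpNorm_mono hmono).trans (le_of_eq ?_)
        have he : (fun ω => ‖x (b : Set Ω)‖ * ψ b ω) = (‖x (b : Set Ω)‖ : ℝ) • ψ b := rfl
        rw [he, eLpNorm_const_smul, enorm_norm, enorm_eq_nnnorm]
      calc eLpNorm wfun q P = (eLpNorm wfun q P ^ p) ^ (1 / p) := by
            rw [← ENNReal.rpow_mul, mul_one_div_cancel hp0.ne', ENNReal.rpow_one]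
        _ ≤ Ssum ^ (1 / p) := by
            refine ENNReal.rpow_le_rpow ?_ (by positivity)
            rw [hw_eq, hSsum]
            refine Finset.sum_le_sum fun b hb => ?_
            calc eLpNorm (fun ω => ‖x (b : Set Ω)‖ * ((P (st b)).toReal *
                  Set.indicator (b : Set Ω) (fun _ => (1 : ℝ)) ω)) q P ^ p
                ≤ ((‖x (b : Set Ω)‖₊ : ℝ≥0∞) * eLpNorm (ψ b) q P) ^ p :=
                  ENNReal.rpow_le_rpow (hterm_le b hb) hp0.le
              _ = (‖x (b : Set Ω)‖₊ : ℝ≥0∞) ^ p * eLpNorm (ψ b) q P ^ p :=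
                  ENNReal.mul_rpow_of_nonneg _ _ hp0.le
    -- bound for `gfun` via the scalar martingale type hypothesis
    have hgmem : MemLp gfun q P := by
      have he : gfun = ∑ b ∈ s, fun ω => ‖x (b : Set Ω)‖ * ψ b ω := by
        ext ω; simp [gfun]
      rw [he, hqdef]
      exact memLp_finsetSum' s fun b _ =>
        (S13.psi_memℒp F (hatm b) (hbe b) (ENNReal.ofReal p)).const_mul _
    have hg : eLpNorm gfun q P ≤ ENNReal.ofReal M * Ssum ^ (1 / p) := by
      have hmt := hM.2 gfun hgmem
      have hint : ∫ ω, gfun ω ∂P = 0 := by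
        rw [show ∫ ω, gfun ω ∂P = ∫ ω, ∑ b ∈ s, ‖x (b : Set Ω)‖ * ψ b ω ∂P from rfl]
        rw [integral_finset_sum s fun b _ =>
          ((S13.psi_integrable F (hatm b) (hbe b)).const_mul _)]
        refine Finset.sum_eq_zero fun b _ => ?_
        rw [integral_const_mul]
        have hz : ∫ ω, ψ b ω ∂P = 0 := S13.psi_integral F (hatm b) (hbe b)
        rw [hz, mul_zero]
      have hce : ∀ k : ℕ, P[gfun|F.filt k] =ᵐ[P]
          ∑ b ∈ s, fun ω => ‖x (b : Set Ω)‖ * (P[ψ b|F.filt k]) ω := by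
        intro k
        have he : gfun = ∑ b ∈ s, fun ω => ‖x (b : Set Ω)‖ * ψ b ω := by
          ext ω; simp [gfun]
        rw [he]
        refine (condExp_finsetSum (fun b _ =>
          ((S13.psi_integrable F (hatm b) (hbe b)).const_mul _)) _).trans ?_
        refine eventuallyEq_sum fun b _ => ?_
        exact condExp_smul (‖x (b : Set Ω)‖) (ψ b) _
      have hmd : ∀ m : ℕ, F.mdiff gfun m =ᵐ[P]
          fun ω => ∑ b ∈ s.filter (fun b => lvl b = m), ‖x (b : Set Ω)‖ * ψ b ω := by
        intro m
        have h1 := (hce (m + 1)).sub (hce m)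
        refine h1.trans ?_
        have hball : ∀ᵐ ω ∂P, ∀ b ∈ s,
            (P[ψ b|F.filt (m + 1)]) ω - (P[ψ b|F.filt m]) ω =
              if lvl b = m then ψ b ω else 0 := by
          rw [Filter.eventually_all_finset]
          intro b _
          by_cases hlb : lvl b = m
          · subst hlb
            have hmm := S13.psi_mdiff_self F (hatm b) (hbe b)
            filter_upwards [hmm] with ω hω
            rw [if_pos rfl]
            exact hω
          · have hmm := S13.psi_mdiff_of_ne F (hatm b) (hbe b)
              (show m ≠ lvl b from fun h => hlb h.symm)
            filter_upwards [hmm] with ω hω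
            rw [if_neg hlb]
            exact hω
        filter_upwards [hball] with ω hω
        simp only [Pi.sub_apply, Finset.sum_apply]
        rw [← Finset.sum_sub_distrib, Finset.sum_filter]
        refine Finset.sum_congr rfl fun b hb => ?_
        rw [← mul_sub, hω b hb]
        by_cases hlb : lvl b = m <;> simp [hlb]
      have hlev : ∀ m : ℕ, eLpNorm (F.mdiff gfun m) q P ^ p =
          ∑ b ∈ s.filter (fun b => lvl b = m),
            (‖x (b : Set Ω)‖₊ : ℝ≥0∞) ^ p * eLpNorm (ψ b) q P ^ p := by
        intro m
        rw [eLpNorm_congr_ae (hmd m), hqdef]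
        rw [S13.eLpNorm_rpow_sum_of_disjoint _ _
          (fun b _ => (hψ_meas b).const_mul _) ?_ hp0]
        · refine Finset.sum_congr rfl fun b _ => ?_
          have he : (fun ω => ‖x (b : Set Ω)‖ * ψ b ω) = (‖x (b : Set Ω)‖ : ℝ) • ψ b := rfl
          rw [he, eLpNorm_const_smul, enorm_norm, enorm_eq_nnnorm,
            ENNReal.mul_rpow_of_nonneg _ _ hp0.le]
        · intro b hb c hc hbc ω hbne
          have hlb := (Finset.mem_filter.mp hb).2
          have hlc := (Finset.mem_filter.mp hc).2
          have hωb : ω ∈ atm b := by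
            by_contra hω
            have hz : ψ b ω = 0 := S13.psi_support F (hatm b) (hbe b) hω
            exact hbne (by rw [hz, mul_zero])
          have hne : atm b ≠ atm c := by
            intro h
            apply hbc
            apply Subtype.ext
            have hstar : F.star (lvl b) (atm b) = F.star (lvl c) (atm c) := by
              rw [h, hlb, hlc]
            rw [hbe b, hbe c, show st b = F.star (lvl b) (atm b) from rfl,
              show st c = F.star (lvl c) (atm c) from rfl, hstar, h]
          have hatm_b : atm b ∈ F.part m := by rw [← hlb]; exact hatm b
          have hatm_c : atm c ∈ F.part m := by rw [← hlc]; exact hatm c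
          have hdis : Disjoint (atm b) (atm c) :=
            F.disj m (Finset.mem_coe.mpr hatm_b) (Finset.mem_coe.mpr hatm_c) hne
          have hωc : ω ∉ atm c := Set.disjoint_left.mp hdis hωb
          have hz : ψ c ω = 0 := S13.psi_support F (hatm c) (hbe c) hωc
          rw [hz, mul_zero]
      have htsum : (∑' m : ℕ, eLpNorm (F.mdiff gfun m) q P ^ p) = Ssum := by
        rw [tsum_eq_sum (s := s.image lvl)
          (fun m hm => by
            rw [hlev m, Finset.filter_eq_empty_iff.mpr
              (fun b hb h => hm ((show lvl b = m from h) ▸ Finset.mem_image_of_mem lvl hb)),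
              Finset.sum_empty])]
        rw [hSsum]
        calc ∑ m ∈ s.image lvl, eLpNorm (F.mdiff gfun m) q P ^ p
            = ∑ m ∈ s.image lvl, ∑ b ∈ s.filter (fun b => lvl b = m),
                (‖x (b : Set Ω)‖₊ : ℝ≥0∞) ^ p * eLpNorm (ψ b) q P ^ p :=
              Finset.sum_congr rfl fun m _ => hlev m
          _ = ∑ b ∈ s, (‖x (b : Set Ω)‖₊ : ℝ≥0∞) ^ p * eLpNorm (ψ b) q P ^ p :=
              Finset.sum_fiberwise_of_maps_to (fun b hb => Finset.mem_image_of_mem lvl hb) _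
      have hmtb : F.mtBound gfun p = Ssum ^ (1 / p) := by
        simp only [Paper.FilteredAtomic.mtBound]
        rw [hint]
        simp only [norm_zero, nnnorm_zero, ENNReal.coe_zero,
          ENNReal.zero_rpow_of_pos hp0, zero_add]
        rw [← hqdef, htsum]
      rw [hmtb] at hmt
      exact hmt
    calc eLpNorm (fS s) q P ≤ eLpNorm gfun q P + eLpNorm wfun q P := h2
      _ ≤ ENNReal.ofReal M * Ssum ^ (1 / p) + Ssum ^ (1 / p) := add_le_add hg hw
      _ = (ENNReal.ofReal M + 1) * Ssum ^ (1 / p) := by ring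
  -- pass to the limit
  have hbnd : ∀ k, eLpNorm (fS (Λ k)) q P ≤ (ENNReal.ofReal M + 1) *
      (∑' b : Paper.G1 R A, (‖x (b : Set Ω)‖₊ : ℝ≥0∞) ^ p * eLpNorm (ψ b) q P ^ p) ^ (1 / p) := by
    intro k
    refine (hmain (Λ k)).trans (mul_le_mul_right ?_ _)
    exact ENNReal.rpow_le_rpow (ENNReal.sum_le_tsum _) (by positivity)
  have hlim : (Filter.atTop.liminf fun k => eLpNorm (fS (Λ k)) q P) ≤
      (ENNReal.ofReal M + 1) *
      (∑' b : Paper.G1 R A, (‖x (b : Set Ω)‖₊ : ℝ≥0∞) ^ p * eLpNorm (ψ b) q P ^ p) ^ (1 / p) := by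
    refine (Filter.liminf_le_liminf (Filter.Eventually.of_forall hbnd)).trans ?_
    rw [Filter.liminf_const]
  have hconst : (ENNReal.ofReal M + 1 : ℝ≥0∞) ≤
      ENNReal.ofReal ((2 : ℝ) ^ (1 - 1 / p) * (1 + M ^ p) ^ (1 / p)) := by
    have hM0 : (0 : ℝ) ≤ M := le_trans zero_le_one hM.1
    have hci := S13.const_ineq hp1 hM0
    calc (ENNReal.ofReal M + 1 : ℝ≥0∞) = ENNReal.ofReal (M + 1) := by
          rw [ENNReal.ofReal_add hM0 zero_le_one, ENNReal.ofReal_one]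
      _ ≤ _ := ENNReal.ofReal_le_ofReal (by linarith)
  refine le_trans (hFatou.trans hlim) ?_
  exact mul_le_mul_left hconst _
end
end

section
/- Let 1 < p < 2, let (Ω, F, P) be a probability space with an increasing sequence (F_j)_{j≥1} of sub-σ-algebras of F, and set F_0 the trivial σ-algebra. Let S ∈ F, let K > 0, and let g : Ω → [−1, 1] be a measurable function with supp g ⊆ S and ∑_{j≥1} ‖E[g | F_j] − E[g | F_{j−1}]‖_{L¹(Ω)} ≤ K · P(S). Then ∑_{j≥1} ‖E[g | F_j] − E[g | F_{j−1}]‖_{L^p(Ω)}^p ≤ K^{2−p} · P(S). -/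
open MeasureTheory ENNReal

noncomputable section

open MeasureTheory ENNReal in
/-- interpolation of the variational bound: `L¹` control of the martingale
differences of a bounded function gives `ℓ^p(L^p)` control. -/
theorem statement_17 (p : ℝ) (hp1 : 1 < p) (hp2 : p < 2)
    {Ω : Type*} [m0 : MeasurableSpace Ω] (P : Measure Ω) [IsProbabilityMeasure P]
    (F : ℕ → MeasurableSpace Ω) (hmono : Monotone F) (hle : ∀ j, F j ≤ m0)
    (hF0 : F 0 = ⊥)
    (S : Set Ω) (hS : MeasurableSet S)
    (K : ℝ) (hK : 0 < K)
    (g : Ω → ℝ) (hgmeas : Measurable g) (hgb : ∀ ω, g ω ∈ Set.Icc (-1 : ℝ) 1)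
    (hsupp : Function.support g ⊆ S)
    (hvar : ∑' j : ℕ, eLpNorm (P[g|F (j + 1)] - P[g|F j]) 1 P ≤ ENNReal.ofReal K * P S) :
    ∑' j : ℕ, eLpNorm (P[g|F (j + 1)] - P[g|F j]) (ENNReal.ofReal p) P ^ p ≤
      ENNReal.ofReal (K ^ (2 - p)) * P S := by

  classical
  have hp0 : (0:ℝ) < p := lt_trans one_pos hp1
  have hgb' : ∀ ω, |g ω| ≤ 1 := fun ω => abs_le.2 ⟨(hgb ω).1, (hgb ω).2⟩
  have hgint : Integrable g P :=
    ⟨hgmeas.aestronglyMeasurable, HasFiniteIntegral.of_bounded (C := 1)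
      (Filter.Eventually.of_forall fun ω => by simpa [Real.norm_eq_abs] using hgb' ω)⟩
  have hfb : ∀ n, ∀ᵐ ω ∂P, |(P[g|F n]) ω| ≤ 1 := by
    intro n
    have h1 : ∀ᵐ ω ∂P, |g ω| ≤ ((1:NNReal):ℝ) :=
      Filter.Eventually.of_forall fun ω => by simpa using hgb' ω
    simpa using ae_bdd_condExp_of_ae_bdd (m := F n) h1
  have hfsm : ∀ n, StronglyMeasurable[F n] (P[g|F n]) := fun n => stronglyMeasurable_condExp
  have hfaesm : ∀ n, AEStronglyMeasurable (P[g|F n]) P := fun n =>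
    ((hfsm n).mono (hle n)).aestronglyMeasurable
  have hprod_int : ∀ n m, Integrable (fun ω => (P[g|F n]) ω * (P[g|F m]) ω) P := by
    intro n m
    refine ⟨(hfaesm n).mul (hfaesm m), HasFiniteIntegral.of_bounded (C := 1) ?_⟩
    filter_upwards [hfb n, hfb m] with ω h1 h2
    rw [Real.norm_eq_abs, abs_mul]
    nlinarith [abs_nonneg ((P[g|F n]) ω), abs_nonneg ((P[g|F m]) ω)]
  have hfg_int : ∀ n, Integrable (fun ω => (P[g|F n]) ω * g ω) P := by
    intro n
    refine ⟨(hfaesm n).mul hgmeas.aestronglyMeasurable,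
      HasFiniteIntegral.of_bounded (C := 1) ?_⟩
    filter_upwards [hfb n] with ω h1
    rw [Real.norm_eq_abs, abs_mul]
    nlinarith [abs_nonneg ((P[g|F n]) ω), abs_nonneg (g ω), hgb' ω]
  -- key conditional expectation identity
  have key : ∀ n : ℕ, ∀ h : Ω → ℝ, StronglyMeasurable[F n] h → (∀ᵐ ω ∂P, |h ω| ≤ 1) →
      ∫ ω, h ω * (P[g|F n]) ω ∂P = ∫ ω, h ω * g ω ∂P := by
    intro n h hsm hb
    have hhm : AEStronglyMeasurable h P := (hsm.mono (hle n)).aestronglyMeasurable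
    have hint : Integrable (h * g) P := by
      refine ⟨hhm.mul hgmeas.aestronglyMeasurable, HasFiniteIntegral.of_bounded (C := 1) ?_⟩
      filter_upwards [hb] with ω h1
      rw [Pi.mul_apply, Real.norm_eq_abs, abs_mul]
      nlinarith [abs_nonneg (h ω), abs_nonneg (g ω), hgb' ω]
    have hcond := condExp_mul_of_stronglyMeasurable_left (m := F n) (μ := P) hsm hint hgint
    calc ∫ ω, h ω * (P[g|F n]) ω ∂P = ∫ ω, (h * P[g|F n]) ω ∂P := rfl
      _ = ∫ ω, (P[(h * g)|F n]) ω ∂P := (integral_congr_ae hcond).symm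
      _ = ∫ ω, (h * g) ω ∂P := integral_condExp (hle n)
      _ = ∫ ω, h ω * g ω ∂P := rfl
  have h_ff : ∀ n m, n ≤ m →
      ∫ ω, (P[g|F n]) ω * (P[g|F m]) ω ∂P = ∫ ω, (P[g|F n]) ω * g ω ∂P := fun n m hnm =>
    key m (P[g|F n]) ((hfsm n).mono (hmono hnm)) (hfb n)
  -- the square identity
  have hsq : ∀ j, ∫ ω, ((P[g|F (j+1)]) ω - (P[g|F j]) ω) * ((P[g|F (j+1)]) ω - (P[g|F j]) ω) ∂P
      = (∫ ω, (P[g|F (j+1)]) ω * (P[g|F (j+1)]) ω ∂P)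
        - ∫ ω, (P[g|F j]) ω * (P[g|F j]) ω ∂P := by
    intro j
    have e1 : ∫ ω, (P[g|F j]) ω * (P[g|F (j+1)]) ω ∂P = ∫ ω, (P[g|F j]) ω * g ω ∂P :=
      h_ff j (j+1) (Nat.le_succ j)
    have e2 : ∫ ω, (P[g|F j]) ω * (P[g|F j]) ω ∂P = ∫ ω, (P[g|F j]) ω * g ω ∂P :=
      h_ff j j le_rfl
    have expand : (fun ω => ((P[g|F (j+1)]) ω - (P[g|F j]) ω) * ((P[g|F (j+1)]) ω - (P[g|F j]) ω))
        = fun ω => ((P[g|F (j+1)]) ω * (P[g|F (j+1)]) ω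
            - 2 * ((P[g|F j]) ω * (P[g|F (j+1)]) ω)) + (P[g|F j]) ω * (P[g|F j]) ω := by
      funext ω; ring
    have int1 : Integrable (fun ω => (P[g|F (j+1)]) ω * (P[g|F (j+1)]) ω
        - 2 * ((P[g|F j]) ω * (P[g|F (j+1)]) ω)) P := by
      exact (hprod_int (j+1) (j+1)).sub ((hprod_int j (j+1)).const_mul 2)
    have int2 : Integrable (fun ω => 2 * ((P[g|F j]) ω * (P[g|F (j+1)]) ω)) P :=
      (hprod_int j (j+1)).const_mul 2
    rw [expand, integral_add int1 (hprod_int j j),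
      integral_sub (hprod_int (j+1) (j+1)) int2,
      integral_const_mul, e1, ← e2]
    ring
  -- bound on ∫ |g|
  have habs_le : ∫ ω, |g ω| ∂P ≤ (P S).toReal := by
    have hle1 : ∀ ω, |g ω| ≤ S.indicator (fun _ => (1:ℝ)) ω := by
      intro ω
      by_cases hω : ω ∈ S
      · simpa [Set.indicator_of_mem hω] using hgb' ω
      · have hg0 : g ω = 0 := by
          by_contra h0
          exact hω (hsupp h0)
        simp [hg0, Set.indicator_of_notMem hω]
    calc ∫ ω, |g ω| ∂P ≤ ∫ ω, S.indicator (fun _ => (1:ℝ)) ω ∂P :=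
          integral_mono hgint.abs ((integrable_const (1:ℝ)).indicator hS) hle1
      _ = (P S).toReal := by exact integral_indicator_one (μ := P) hS
  -- partial sums of squared L² norms are bounded by P S
  have hpartial : ∀ N, ∑ j ∈ Finset.range N,
      ∫ ω, ((P[g|F (j+1)]) ω - (P[g|F j]) ω) * ((P[g|F (j+1)]) ω - (P[g|F j]) ω) ∂P
      ≤ (P S).toReal := by
    intro N
    have tel : ∑ j ∈ Finset.range N,
        ∫ ω, ((P[g|F (j+1)]) ω - (P[g|F j]) ω) * ((P[g|F (j+1)]) ω - (P[g|F j]) ω) ∂P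
        = (∫ ω, (P[g|F N]) ω * (P[g|F N]) ω ∂P)
          - ∫ ω, (P[g|F 0]) ω * (P[g|F 0]) ω ∂P := by
      rw [Finset.sum_congr rfl fun j _ => hsq j]
      exact Finset.sum_range_sub (fun n => ∫ ω, (P[g|F n]) ω * (P[g|F n]) ω ∂P) N
    have h1 : ∫ ω, (P[g|F N]) ω * (P[g|F N]) ω ∂P ≤ (P S).toReal := by
      rw [key N (P[g|F N]) (hfsm N) (hfb N)]
      refine le_trans ?_ habs_le
      refine integral_mono_ae (hfg_int N) hgint.abs ?_
      filter_upwards [hfb N] with ω h1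
      calc (P[g|F N]) ω * g ω ≤ |(P[g|F N]) ω * g ω| := le_abs_self _
        _ = |(P[g|F N]) ω| * |g ω| := abs_mul _ _
        _ ≤ 1 * |g ω| := mul_le_mul_of_nonneg_right h1 (abs_nonneg _)
        _ = |g ω| := one_mul _
    have h0 : 0 ≤ ∫ ω, (P[g|F 0]) ω * (P[g|F 0]) ω ∂P :=
      integral_nonneg fun ω => mul_self_nonneg _
    rw [tel]; linarith
  -- measurability of the differences
  have hDaesm : ∀ j : ℕ, AEStronglyMeasurable (P[g|F (j+1)] - P[g|F j]) P := fun j =>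
    (hfaesm (j+1)).sub (hfaesm j)
  have hDenn : ∀ j : ℕ, AEMeasurable (fun ω => (‖(P[g|F (j+1)] - P[g|F j]) ω‖₊ : ℝ≥0∞)) P :=
    fun j => (hDaesm j).aemeasurable.enorm
  have hDD_int : ∀ j : ℕ, Integrable
      (fun ω => ((P[g|F (j+1)]) ω - (P[g|F j]) ω) * ((P[g|F (j+1)]) ω - (P[g|F j]) ω)) P := by
    intro j
    refine ⟨((hfaesm (j+1)).sub (hfaesm j)).mul ((hfaesm (j+1)).sub (hfaesm j)),
      HasFiniteIntegral.of_bounded (C := 4) ?_⟩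
    filter_upwards [hfb (j+1), hfb j] with ω h1 h2
    rw [Real.norm_eq_abs, abs_mul]
    rw [abs_le] at h1 h2
    have ha : |(P[g|F (j+1)]) ω - (P[g|F j]) ω| ≤ 2 := by
      rw [abs_le]; constructor <;> linarith [h1.1, h1.2, h2.1, h2.2]
    nlinarith [abs_nonneg ((P[g|F (j+1)]) ω - (P[g|F j]) ω)]
  -- the squared L² norm as an extended nonnegative integral
  have hQ : ∀ j : ℕ, ∫⁻ ω, (‖(P[g|F (j+1)] - P[g|F j]) ω‖₊ : ℝ≥0∞) ^ (2:ℝ) ∂P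
      = ENNReal.ofReal
        (∫ ω, ((P[g|F (j+1)]) ω - (P[g|F j]) ω) * ((P[g|F (j+1)]) ω - (P[g|F j]) ω) ∂P) := by
    intro j
    rw [ofReal_integral_eq_lintegral_ofReal (hDD_int j)
      (Filter.Eventually.of_forall fun ω => mul_self_nonneg _)]
    refine lintegral_congr fun ω => ?_
    rw [← enorm_eq_nnnorm, ← ofReal_norm, Real.norm_eq_abs,
      ENNReal.ofReal_rpow_of_nonneg (abs_nonneg _) (by norm_num : (0:ℝ) ≤ 2)]
    congr 1
    rw [show ((2:ℝ)) = ((2:ℕ):ℝ) by norm_num, Real.rpow_natCast, pow_two, Pi.sub_apply,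
      abs_mul_abs_self]
  -- the sum of squared L² norms is at most P S
  have hQsum : ∑' j : ℕ, ∫⁻ ω, (‖(P[g|F (j+1)] - P[g|F j]) ω‖₊ : ℝ≥0∞) ^ (2:ℝ) ∂P ≤ P S := by
    rw [ENNReal.tsum_eq_iSup_sum]
    refine iSup_le fun s => ?_
    obtain ⟨N, hN⟩ := s.exists_nat_subset_range
    calc ∑ j ∈ s, ∫⁻ ω, (‖(P[g|F (j+1)] - P[g|F j]) ω‖₊ : ℝ≥0∞) ^ (2:ℝ) ∂P
        ≤ ∑ j ∈ Finset.range N, ∫⁻ ω, (‖(P[g|F (j+1)] - P[g|F j]) ω‖₊ : ℝ≥0∞) ^ (2:ℝ) ∂P :=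
          Finset.sum_le_sum_of_subset hN
      _ = ENNReal.ofReal (∑ j ∈ Finset.range N,
            ∫ ω, ((P[g|F (j+1)]) ω - (P[g|F j]) ω) * ((P[g|F (j+1)]) ω - (P[g|F j]) ω) ∂P) := by
          rw [ENNReal.ofReal_sum_of_nonneg fun j _ => integral_nonneg fun ω => mul_self_nonneg _]
          exact Finset.sum_congr rfl fun j _ => hQ j
      _ ≤ ENNReal.ofReal (P S).toReal := ENNReal.ofReal_le_ofReal (hpartial N)
      _ = P S := ENNReal.ofReal_toReal (measure_ne_top P S)
  -- conjugate exponents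
  have h2p : (2:ℝ) - p ≠ 0 := by linarith
  have hp1' : p - (1:ℝ) ≠ 0 := by linarith
  have hconj : ((1:ℝ)/(2-p)).HolderConjugate (1/(p-1)) := by
    constructor
    · rw [one_div, inv_inv, one_div, inv_inv, inv_one]; ring
    · exact div_pos one_pos (by linarith)
    · exact div_pos one_pos (by linarith)
  have e1 : ∀ x : ℝ≥0∞, (x ^ ((2:ℝ)-p)) ^ ((1:ℝ)/(2-p)) = x := by
    intro x
    rw [← ENNReal.rpow_mul, mul_one_div, div_self h2p, ENNReal.rpow_one]
  have e1' : ∀ x : ℝ≥0∞, (x ^ (p-(1:ℝ))) ^ ((1:ℝ)/(p-1)) = x := by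
    intro x
    rw [← ENNReal.rpow_mul, mul_one_div, div_self hp1', ENNReal.rpow_one]
  have e2 : ∀ x : ℝ≥0∞, (x ^ ((2:ℝ)*(p-1))) ^ ((1:ℝ)/(p-1)) = x ^ (2:ℝ) := by
    intro x
    rw [← ENNReal.rpow_mul, mul_one_div, mul_div_assoc, div_self hp1', mul_one]
  have e3 : ∀ x : ℝ≥0∞, x ^ ((2:ℝ)-p) * x ^ ((2:ℝ)*(p-1)) = x ^ p := by
    intro x
    rw [← ENNReal.rpow_add_of_nonneg ((2:ℝ)-p) ((2:ℝ)*(p-1)) (by linarith) (by nlinarith)]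
    congr 1; ring
  -- pointwise Hölder (interpolation)
  have hold : ∀ j : ℕ, ∫⁻ ω, (‖(P[g|F (j+1)] - P[g|F j]) ω‖₊ : ℝ≥0∞) ^ p ∂P
      ≤ (∫⁻ ω, (‖(P[g|F (j+1)] - P[g|F j]) ω‖₊ : ℝ≥0∞) ∂P) ^ ((2:ℝ)-p)
        * (∫⁻ ω, (‖(P[g|F (j+1)] - P[g|F j]) ω‖₊ : ℝ≥0∞) ^ (2:ℝ) ∂P) ^ (p-(1:ℝ)) := by
    intro j
    have h := ENNReal.lintegral_mul_le_Lp_mul_Lq P hconj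
      ((hDenn j).pow_const ((2:ℝ)-p)) ((hDenn j).pow_const ((2:ℝ)*(p-1)))
    simp only [Pi.mul_apply, e1, e2, e3, one_div_one_div] at h
    exact h
  -- Hölder for the sums
  have hsum_holder :
      ∑' j : ℕ, (∫⁻ ω, (‖(P[g|F (j+1)] - P[g|F j]) ω‖₊ : ℝ≥0∞) ∂P) ^ ((2:ℝ)-p)
          * (∫⁻ ω, (‖(P[g|F (j+1)] - P[g|F j]) ω‖₊ : ℝ≥0∞) ^ (2:ℝ) ∂P) ^ (p-(1:ℝ))
      ≤ (∑' j : ℕ, ∫⁻ ω, (‖(P[g|F (j+1)] - P[g|F j]) ω‖₊ : ℝ≥0∞) ∂P) ^ ((2:ℝ)-p)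
        * (∑' j : ℕ, ∫⁻ ω, (‖(P[g|F (j+1)] - P[g|F j]) ω‖₊ : ℝ≥0∞) ^ (2:ℝ) ∂P) ^ (p-(1:ℝ)) := by
    have h := ENNReal.lintegral_mul_le_Lp_mul_Lq (Measure.count : Measure ℕ) hconj
      (f := fun j => (∫⁻ ω, (‖(P[g|F (j+1)] - P[g|F j]) ω‖₊ : ℝ≥0∞) ∂P) ^ ((2:ℝ)-p))
      (g := fun j => (∫⁻ ω, (‖(P[g|F (j+1)] - P[g|F j]) ω‖₊ : ℝ≥0∞) ^ (2:ℝ) ∂P) ^ (p-(1:ℝ)))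
      ((measurable_of_countable _).aemeasurable) ((measurable_of_countable _).aemeasurable)
    simp only [Pi.mul_apply, lintegral_count, e1, e1', one_div_one_div] at h
    exact h
  have hq0 : (ENNReal.ofReal p) ≠ 0 := by
    simp only [ne_eq, ENNReal.ofReal_eq_zero, not_le]; linarith
  have hLp : ∀ j : ℕ, eLpNorm (P[g|F (j + 1)] - P[g|F j]) (ENNReal.ofReal p) P ^ p
      = ∫⁻ ω, (‖(P[g|F (j+1)] - P[g|F j]) ω‖₊ : ℝ≥0∞) ^ p ∂P := by
    intro j
    rw [eLpNorm_eq_lintegral_rpow_enorm_toReal hq0 ENNReal.ofReal_ne_top,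
      ENNReal.toReal_ofReal hp0.le, ← ENNReal.rpow_mul,
      one_div_mul_cancel (ne_of_gt hp0), ENNReal.rpow_one]
    rfl
  have hL1 : ∀ j : ℕ, eLpNorm (P[g|F (j + 1)] - P[g|F j]) 1 P
      = ∫⁻ ω, (‖(P[g|F (j+1)] - P[g|F j]) ω‖₊ : ℝ≥0∞) ∂P := fun j =>
    eLpNorm_one_eq_lintegral_enorm
  -- put everything together
  calc ∑' j : ℕ, eLpNorm (P[g|F (j + 1)] - P[g|F j]) (ENNReal.ofReal p) P ^ p
      = ∑' j : ℕ, ∫⁻ ω, (‖(P[g|F (j+1)] - P[g|F j]) ω‖₊ : ℝ≥0∞) ^ p ∂P := tsum_congr hLp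
    _ ≤ ∑' j : ℕ, (∫⁻ ω, (‖(P[g|F (j+1)] - P[g|F j]) ω‖₊ : ℝ≥0∞) ∂P) ^ ((2:ℝ)-p)
          * (∫⁻ ω, (‖(P[g|F (j+1)] - P[g|F j]) ω‖₊ : ℝ≥0∞) ^ (2:ℝ) ∂P) ^ (p-(1:ℝ)) :=
        ENNReal.tsum_le_tsum hold
    _ ≤ (∑' j : ℕ, ∫⁻ ω, (‖(P[g|F (j+1)] - P[g|F j]) ω‖₊ : ℝ≥0∞) ∂P) ^ ((2:ℝ)-p)
          * (∑' j : ℕ, ∫⁻ ω, (‖(P[g|F (j+1)] - P[g|F j]) ω‖₊ : ℝ≥0∞) ^ (2:ℝ) ∂P) ^ (p-(1:ℝ)) :=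
        hsum_holder
    _ ≤ (ENNReal.ofReal K * P S) ^ ((2:ℝ)-p) * (P S) ^ (p-(1:ℝ)) := by
        refine mul_le_mul' (ENNReal.rpow_le_rpow ?_ (by linarith))
          (ENNReal.rpow_le_rpow hQsum (by linarith))
        calc ∑' j : ℕ, ∫⁻ ω, (‖(P[g|F (j+1)] - P[g|F j]) ω‖₊ : ℝ≥0∞) ∂P
            = ∑' j : ℕ, eLpNorm (P[g|F (j + 1)] - P[g|F j]) 1 P :=
              tsum_congr fun j => (hL1 j).symm
          _ ≤ ENNReal.ofReal K * P S := hvar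
    _ = ENNReal.ofReal (K ^ (2 - p)) * P S := by
        rw [ENNReal.mul_rpow_of_nonneg _ _ (by linarith : (0:ℝ) ≤ 2-p), mul_assoc,
          ← ENNReal.rpow_add_of_nonneg ((2:ℝ)-p) (p-(1:ℝ)) (by linarith) (by linarith),
          show (2:ℝ)-p+(p-1) = (1:ℝ) by ring, ENNReal.rpow_one,
          ENNReal.ofReal_rpow_of_pos hK]
end
end
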